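/- arXiv:2407.20914 — 3 statements merged into one kernel-verified Lean document; each statement's English description precedes it below -/
import Mathlib

section
/- Suppose the real penalty parameter satisfies λ > (sin(π/K)/(1 − cos(π/K)))·max_{1≤u≤U} L_u. Then every global maximizer x* of f_0 over the relaxed feasible set A (i.e., x* ∈ A with f_0(x) ≤ f_0(x*) for all x ∈ A) satisfies x*_n ∈ 𝒳 for every n = 1,…,N; in particular ‖x*‖₁ = N + 1. -/
open Complex Finset

noncomputable section

/-- The set of `K`-th roots of unity in `ℂ`. -/
def rootsSet (K : ℕ) : Set ℂ :=
  {z : ℂ | ∃ k : ℕ, k < K ∧ z = Complex.exp ((2 * Real.pi * k / K : ℝ) * Complex.I)}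

/-- The convex hull (over `ℝ`) of the `K`-th roots of unity. -/
def hullSet (K : ℕ) : Set ℂ := convexHull ℝ (rootsSet K)

/-- The relaxed feasible set `A`. -/
def feasA (K N : ℕ) : Set (Fin (N + 1) → ℂ) :=
  {x | x 0 = 1 ∧ ∀ n : Fin (N + 1), n ≠ 0 → x n ∈ hullSet K}

/-- The discrete feasible set `D`. -/
def feasD (K N : ℕ) : Set (Fin (N + 1) → ℂ) :=
  {x | x 0 = 1 ∧ ∀ n : Fin (N + 1), n ≠ 0 → x n ∈ rootsSet K}

/-- The ℓ1 norm of a complex vector. -/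
def norm1 {N : ℕ} (x : Fin (N + 1) → ℂ) : ℝ := ∑ n, ‖x n‖

/-- The ℓ2 norm of a complex vector. -/
def norm2 {N : ℕ} (x : Fin (N + 1) → ℂ) : ℝ := Real.sqrt (∑ n, ‖x n‖ ^ 2)

/-- The (real) quadratic form `x^H C x`. -/
def quadForm {N : ℕ} (C : Matrix (Fin (N + 1)) (Fin (N + 1)) ℂ)
    (x : Fin (N + 1) → ℂ) : ℝ :=
  (dotProduct (star x) (Matrix.mulVec C x)).re

/-- The Frobenius norm of a complex matrix. -/
def frobNorm {N : ℕ} (M : Matrix (Fin (N + 1)) (Fin (N + 1)) ℂ) : ℝ :=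
  Real.sqrt (∑ i, ∑ j, ‖M i j‖ ^ 2)

/-- The SINR-type objective `f_u`. -/
def fObj {N U : ℕ} (C : Fin U → Fin U → Matrix (Fin (N + 1)) (Fin (N + 1)) ℂ)
    (σ : Fin U → ℝ) (u : Fin U) (x : Fin (N + 1) → ℂ) : ℝ :=
  quadForm (C u u) x /
    ((∑ u' ∈ Finset.univ.erase u, quadForm (C u u') x) + σ u ^ 2)

/-- The Lipschitz constant `L_u`. -/
def Lconst {N U : ℕ} (C : Fin U → Fin U → Matrix (Fin (N + 1)) (Fin (N + 1)) ℂ)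
    (σ : Fin U → ℝ) (u : Fin U) : ℝ :=
  2 * Real.sqrt ((N : ℝ) + 1) * frobNorm (C u u) / σ u ^ 2 *
    (1 + ((N : ℝ) + 1) * frobNorm (∑ u' ∈ Finset.univ.erase u, C u u') / σ u ^ 2)

/-- The minimum of the `f_u` over all users. -/
def minObj {N U : ℕ} (C : Fin U → Fin U → Matrix (Fin (N + 1)) (Fin (N + 1)) ℂ)
    (σ : Fin U → ℝ) (x : Fin (N + 1) → ℂ) : ℝ :=
  ⨅ u : Fin U, fObj C σ u x

/-- The penalized objective `f_0`. -/
def f0 {N U : ℕ} (C : Fin U → Fin U → Matrix (Fin (N + 1)) (Fin (N + 1)) ℂ)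
    (σ : Fin U → ℝ) (lam : ℝ) (x : Fin (N + 1) → ℂ) : ℝ :=
  minObj C σ x + lam * norm1 x

set_option maxHeartbeats 1000000

open Real
section AuxGeom

lemma Epos (c s x y r : ℝ) (hc0 : 0 ≤ c) (hc1 : c < 1) (hs : 0 < s)
    (hcs : c^2 + s^2 = 1) (hy : 0 ≤ y) (hr0 : 0 ≤ r) (hr1 : r ≤ 1)
    (hcirc : x^2 + y^2 = r^2) (hsec : r*c ≤ x) (hedge : x*c + y*s ≤ c) :
    r*(1+c) - c*(1+r^2) ≤ x*(1-c) := by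
  have hx0 : 0 ≤ x := le_trans (mul_nonneg hr0 hc0) hsec
  have hx2 : (r*c)^2 ≤ x^2 := by
    nlinarith [mul_le_mul hsec hsec (mul_nonneg hr0 hc0) hx0]
  have hxr : x ≤ r := by nlinarith [sq_nonneg y]
  have hyrs : y ≤ r*s := by nlinarith [mul_nonneg hr0 hs.le]
  rcases le_or_gt r c with hrc | hrc
  · nlinarith [mul_nonneg (sub_nonneg.2 hrc) (sub_nonneg.2 (show c*r ≤ 1 by nlinarith)), mul_nonneg (sub_nonneg.2 hsec) (sub_nonneg.2 hc1.le)]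
  · have h1c : (0:ℝ) < 1 - c := by linarith
    obtain ⟨x0, hXx0⟩ : ∃ t : ℝ, t * (1-c) = r - c + c*r*(1-r) :=
      ⟨(r - c + c*r*(1-r)) / (1-c), div_mul_cancel₀ _ (ne_of_gt h1c)⟩
    have hgoal : r*(1+c) - c*(1+r^2) = x0 * (1-c) := by rw [hXx0]; ring
    rw [hgoal]
    have hx0c : r*c ≤ x0 := by
      have h : r*c*(1-c) ≤ x0*(1-c) := by
        rw [hXx0]
        nlinarith [mul_nonneg (sub_nonneg.2 hrc.le) (sub_nonneg.2 (show c*r ≤ 1 by nlinarith))]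
      exact le_of_mul_le_mul_right h h1c
    have hx0r : x0 ≤ r := by
      have h : x0*(1-c) ≤ r*(1-c) := by rw [hXx0]; nlinarith [sq_nonneg (1-r), hc0]
      exact le_of_mul_le_mul_right h h1c
    have hx00 : 0 ≤ x0 := le_trans (mul_nonneg hr0 hc0) hx0c
    have hx0sq : x0^2 ≤ r^2 := by nlinarith
    obtain ⟨y0, hy00, hy0sq⟩ : ∃ t : ℝ, 0 ≤ t ∧ t^2 = r^2 - x0^2 :=
      ⟨Real.sqrt (r^2 - x0^2), Real.sqrt_nonneg _, Real.sq_sqrt (by linarith)⟩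
    -- K1 : c ≤ x0*c + y0*s
    have key1 : c*(1-x0) ≤ y0*s := by
      have hsq : (c*(1-x0)*(1-c))^2 ≤ (y0*s*(1-c))^2 := by
        have hident : ((r*(1-c))^2 - (x0*(1-c))^2)*(1-c^2) - c^2*((1-c)-x0*(1-c))^2
            = c*(1-r)^2*(r-c)*(2-c*r-c^2) := by rw [hXx0]; ring
        have h2 : (0:ℝ) ≤ 2 - c*r - c^2 := by nlinarith
        have hpos : 0 ≤ c*(1-r)^2*(r-c)*(2-c*r-c^2) :=
          mul_nonneg (mul_nonneg (mul_nonneg hc0 (sq_nonneg (1-r))) (sub_nonneg.2 hrc.le)) h2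
        have ha : (y0*s*(1-c))^2 = ((r*(1-c))^2 - (x0*(1-c))^2)*(1-c^2) := by
          have h4 : s^2 = 1-c^2 := by linarith
          have h5 : (y0*s*(1-c))^2 = y0^2 * s^2 * (1-c)^2 := by ring
          rw [h5, hy0sq, h4]; ring
        have hb : (c*(1-x0)*(1-c))^2 = c^2*((1-c)-x0*(1-c))^2 := by ring
        linarith [hident, hpos]
      have hl : 0 ≤ c*(1-x0)*(1-c) := by
        have h3 : 0 ≤ 1 - x0 := by linarith
        positivity
      have ha0 : 0 ≤ c*(1-x0) := mul_nonneg hc0 (by linarith)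
      have hb0 : 0 ≤ y0*s := mul_nonneg hy00 hs.le
      have h6 : (c*(1-x0))^2 * ((1-c)^2) ≤ (y0*s)^2 * ((1-c)^2) := by nlinarith [hsq]
      have ha2 : (c*(1-x0))^2 ≤ (y0*s)^2 := le_of_mul_le_mul_right h6 (by positivity)
      have := Real.sqrt_le_sqrt ha2
      rwa [Real.sqrt_sq ha0, Real.sqrt_sq hb0] at this
    -- suppose x < x0, derive contradiction
    by_contra hcon
    push_neg at hcon
    have hlt : x < x0 := by nlinarith
    have hyy : y0 ≤ y := by nlinarith
    have d7 : c*y ≤ s*x := by nlinarith [mul_le_mul_of_nonneg_left hyrs hc0, mul_le_mul_of_nonneg_left hsec hs.le]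
    have hy0rs : y0 ≤ r*s := by
      nlinarith [mul_le_mul hx0c hx0c (mul_nonneg hr0 hc0) hx00, mul_nonneg hr0 hs.le]
    have d8 : c*y0 ≤ s*x0 := by nlinarith [mul_le_mul_of_nonneg_left hy0rs hc0, mul_le_mul_of_nonneg_left hx0c hs.le]
    have hke : x*c + y*s ≤ x0*c + y0*s := by linarith
    have hmul : c*(x - x0)*(y + y0) ≤ s*(x - x0)*(x + x0) := by
      have h0 : 0 ≤ y + y0 := by linarith
      nlinarith [mul_le_mul_of_nonneg_right (show c*(x - x0) ≤ s*(y0 - y) by linarith) h0]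
    have hsum : s*(x + x0) ≤ c*(y + y0) := by nlinarith [hmul]
    have e1 : c*y = s*x := by linarith
    have e2 : c*y0 = s*x0 := by linarith
    have : s*x0 ≤ s*x := by
      calc s*x0 = c*y0 := e2.symm
        _ ≤ c*y := by nlinarith
        _ = s*x := e1
    have := le_of_mul_le_mul_left this hs
    linarith


lemma cos_bound (α t : ℝ) (hα : 0 < α) (hαπ : α ≤ π/2) (h1 : α ≤ t) (h2 : t ≤ 2*π - α) :
    Real.cos t ≤ Real.cos α := by
  rcases le_or_gt t π with h | h
  · exact Real.cos_le_cos_of_nonneg_of_le_pi hα.le h h1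
  · have h3 := Real.cos_le_cos_of_nonneg_of_le_pi hα.le
      (show 2*π - t ≤ π by linarith [Real.pi_pos]) (by linarith)
    rwa [Real.cos_two_pi_sub] at h3

lemma cos_odd (K : ℕ) (hK : 2 ≤ K) (j : ℤ) (hj : Odd j) :
    Real.cos (j * (π/K)) ≤ Real.cos (π/K) := by
  have hKpos : (0:ℝ) < K := by exact_mod_cast (show 0 < K by omega)
  have hα : 0 < π/K := by positivity
  have hαπ : π/K ≤ π/2 := by
    apply div_le_div_of_nonneg_left Real.pi_pos.le (by norm_num) (by exact_mod_cast hK)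
  have hK0 : (2*K : ℤ) ≠ 0 := by omega
  set i : ℤ := j % (2*K) with hi
  have hi0 : 0 ≤ i := Int.emod_nonneg j hK0
  have hi2K : i < 2*K := Int.emod_lt_of_pos j (by omega)
  have hieq : i = j - 2*(K*(j/(2*K))) := by rw [hi, Int.emod_def]; ring
  have hiodd : Odd i := hieq ▸ hj.sub_even ⟨K*(j/(2*K)), by ring⟩
  have hi1 : 1 ≤ i := by
    rcases Int.odd_iff.mp hiodd with h
    omega
  have hcos : Real.cos (j * (π/K)) = Real.cos (i * (π/K)) := by
    have hj' : (j : ℝ) * (π/K) = i * (π/K) + (j/(2*K) : ℤ) * (2*π) := by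
      have : (j:ℝ) = i + (2*K) * ((j/(2*K) : ℤ) : ℝ) := by
        rw [hieq]; push_cast; ring
      rw [this]; field_simp
    rw [hj', Real.cos_add_int_mul_two_pi]
  rw [hcos]
  apply cos_bound _ _ hα hαπ
  · have h4 : (1:ℝ) ≤ (i:ℝ) := by exact_mod_cast hi1
    nlinarith [hα]
  · have : (i:ℝ) ≤ 2*K - 1 := by exact_mod_cast (by omega : i ≤ 2*K - 1)
    have h5 : (i:ℝ) * (π/K) ≤ (2*K-1) * (π/K) := by
      apply mul_le_mul_of_nonneg_right this hα.le
    have h6 : (2*(K:ℝ)-1) * (π/K) = 2*π - π/K := by field_simp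
    linarith

lemma exp_mul_exp_re (θ β : ℝ) :
    (Complex.exp ((θ:ℂ)*Complex.I) * Complex.exp (((-β : ℝ):ℂ)*Complex.I)).re
      = Real.cos (θ - β) := by
  rw [← Complex.exp_add]
  have h : (θ:ℂ)*Complex.I + ((-β : ℝ):ℂ)*Complex.I = ((θ-β : ℝ):ℂ)*Complex.I := by
    push_cast; ring
  rw [h, Complex.exp_ofReal_mul_I_re]

lemma hull_halfplane (K : ℕ) (hK : 2 ≤ K) (m : ℤ) (σ : ℝ) (hσ : σ = 1 ∨ σ = -1)
    (z : ℂ) (hz : z ∈ hullSet K) :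
    (z * Complex.exp (((-(2*π*m/K + σ*(π/K)) : ℝ):ℂ)*Complex.I)).re ≤ Real.cos (π/K) := by
  have hKpos : (0:ℝ) < K := by exact_mod_cast (show 0 < K by omega)
  set β : ℝ := 2*π*m/K + σ*(π/K) with hβ
  set e : ℂ := Complex.exp (((-β : ℝ):ℂ)*Complex.I) with he
  have hconv : Convex ℝ {w : ℂ | (w * e).re ≤ Real.cos (π/K)} := by
    apply convex_halfSpace_le
    exact ⟨fun a b => by simp [add_mul], fun t a => by
      simp [Complex.real_smul, mul_assoc, Complex.re_ofReal_mul]⟩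
  apply convexHull_min _ hconv hz
  rintro u ⟨k, hkK, rfl⟩
  show (Complex.exp ((2 * π * k / K : ℝ) * Complex.I) * e).re ≤ Real.cos (π/K)
  rw [he, exp_mul_exp_re]
  have harg : 2 * π * (k:ℝ) / K - β = (2*((k:ℤ) - m) - σ) * (π/K) := by
    rw [hβ]; push_cast; field_simp; ring
  rw [harg]
  rcases hσ with h | h
  · have : (2*((k:ℤ) - m) - σ) * (π/K) = ((2*((k:ℤ)-m) - 1 : ℤ) : ℝ) * (π/K) := by
      rw [h]; push_cast; ring
    rw [this]
    exact cos_odd K hK _ ⟨((k:ℤ)-m) - 1, by ring⟩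
  · have : (2*((k:ℤ) - m) - σ) * (π/K) = ((2*((k:ℤ)-m) + 1 : ℤ) : ℝ) * (π/K) := by
      rw [h]; push_cast; ring
    rw [this]
    exact cos_odd K hK _ ⟨(k:ℤ)-m, by ring⟩

lemma keyIneq (c s x y r : ℝ) (hc0 : 0 ≤ c) (hc1 : c < 1) (hs : 0 < s)
    (hcs : c^2 + s^2 = 1) (hy : 0 ≤ y) (hr0 : 0 ≤ r) (hr1 : r ≤ 1)
    (hcirc : x^2 + y^2 = r^2) (hsec : r*c ≤ x) (hedge : x*c + y*s ≤ c) :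
    (1-c) * Real.sqrt ((1-x)^2 + y^2) ≤ s * (1-r) := by
  have hE := Epos c s x y r hc0 hc1 hs hcs hy hr0 hr1 hcirc hsec hedge
  have hq : (Real.sqrt ((1-x)^2+y^2))^2 = (1-x)^2 + y^2 := Real.sq_sqrt (by positivity)
  have h1 : ((1-c) * Real.sqrt ((1-x)^2+y^2))^2 ≤ (s*(1-r))^2 := by
    have h2E : 0 ≤ (1+c)*(1-r)^2 - (1-c)*(1-2*x+r^2) := by nlinarith
    have h3 : 0 ≤ (1-c) * ((1+c)*(1-r)^2 - (1-c)*(1-2*x+r^2)) :=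
      mul_nonneg (by linarith) h2E
    have h4 : ((1-c) * Real.sqrt ((1-x)^2+y^2))^2 = (1-c)^2 * ((1-x)^2+y^2) := by
      rw [mul_pow, hq]
    rw [h4]
    nlinarith [h3, hcs, hcirc]
  have hL : 0 ≤ (1-c) * Real.sqrt ((1-x)^2+y^2) :=
    mul_nonneg (by linarith) (Real.sqrt_nonneg _)
  have hR : 0 ≤ s * (1-r) := mul_nonneg hs.le (by linarith)
  have := Real.sqrt_le_sqrt h1
  rwa [Real.sqrt_sq hL, Real.sqrt_sq hR] at this

lemma geom (K : ℕ) (hK : 2 ≤ K) (z : ℂ) (hz : z ∈ hullSet K) :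
    ∃ v ∈ rootsSet K,
      (1 - Real.cos (π/K)) * ‖v - z‖ ≤ Real.sin (π/K) * (1 - ‖z‖) := by
  have hKpos : (0:ℝ) < K := by exact_mod_cast (show 0 < K by omega)
  have hα : 0 < π/K := by positivity
  have hαπ2 : π/K ≤ π/2 := by
    apply div_le_div_of_nonneg_left Real.pi_pos.le (by norm_num) (by exact_mod_cast hK)
  have hαπ : π/K < π := lt_of_le_of_lt hαπ2 (by linarith [Real.pi_pos])
  set c : ℝ := Real.cos (π/K) with hcdef
  set s : ℝ := Real.sin (π/K) with hsdef
  have hs : 0 < s := Real.sin_pos_of_pos_of_lt_pi hα hαπ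
  have hc0 : 0 ≤ c := Real.cos_nonneg_of_mem_Icc ⟨by linarith, hαπ2⟩
  have hcs : c^2 + s^2 = 1 := by
    rw [hcdef, hsdef]; rw [add_comm]; exact Real.sin_sq_add_cos_sq _
  have hc1 : c < 1 := by nlinarith [hs, hc0]
  -- |z| ≤ 1
  have hr1 : ‖z‖ ≤ 1 := by
    have hsub : hullSet K ⊆ Metric.closedBall 0 1 := by
      apply convexHull_min _ (convex_closedBall _ _)
      rintro u ⟨k, _, rfl⟩
      rw [Metric.mem_closedBall, dist_zero_right, 
        Complex.norm_exp_ofReal_mul_I]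
    have := hsub hz
    simpa [Metric.mem_closedBall, Complex.dist_eq] using this
  set r : ℝ := ‖z‖ with hrdef
  have hr0 : 0 ≤ r := norm_nonneg z
  set θ : ℝ := Complex.arg z with hθdef
  set m : ℤ := round (θ * K / (2*π)) with hmdef
  set φ : ℝ := θ - 2*π*m/K with hφdef
  have hφabs : |φ| ≤ π/K := by
    have h := abs_sub_round (θ * K / (2*π))
    have h2 : φ = (θ * K / (2*π) - m) * (2*π/K) := by
      rw [hφdef]; field_simp; try ring
    rw [h2, abs_mul, abs_of_pos (by positivity : (0:ℝ) < 2*π/K)]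
    calc |θ * K / (2*π) - m| * (2*π/K) ≤ (1/2) * (2*π/K) := by
          apply mul_le_mul_of_nonneg_right h (by positivity)
      _ = π/K := by ring
  -- the vertex
  set v : ℂ := Complex.exp (((2*π*m/K : ℝ):ℂ) * Complex.I) with hvdef
  have hvroot : v ∈ rootsSet K := by
    have hKz : (K:ℤ) ≠ 0 := by omega
    refine ⟨(m % K).toNat, ?_, ?_⟩
    · have h1 : m % K < K := Int.emod_lt_of_pos m (by omega)
      have h2 : 0 ≤ m % K := Int.emod_nonneg m (by omega)
      omega
    · have hmk : ((m % K).toNat : ℤ) = m % K := Int.toNat_of_nonneg (Int.emod_nonneg m hKz)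
      have hkm : ((m % K).toNat : ℤ) = m - K * (m / K) := by rw [hmk, Int.emod_def]
      rw [hvdef]
      have harg : ((2 * π * ((m % K).toNat : ℕ) / K : ℝ):ℂ) * Complex.I
          = ((2*π*m/K : ℝ):ℂ) * Complex.I + ((-(m / K) : ℤ):ℂ) * (2*(π:ℂ)*Complex.I) := by
        have hre : (2 * π * (((m % K).toNat : ℕ) : ℝ) / K : ℝ)
            = 2*π*m/K + (-(m / K) : ℤ) * (2*π) := by
          have h5 : ((((m % K).toNat : ℕ)) : ℝ) = (m:ℝ) - K * ((m/K : ℤ):ℝ) := by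
            exact_mod_cast congrArg (Int.cast : ℤ → ℝ) hkm
          rw [h5]; field_simp; push_cast; ring
        calc ((2 * π * (((m % K).toNat : ℕ):ℝ) / K : ℝ):ℂ) * Complex.I
            = ((2*π*m/K + ((-(m / K) : ℤ):ℝ) * (2*π) : ℝ):ℂ) * Complex.I := by
              rw [hre]
          _ = ((2*π*m/K : ℝ):ℂ) * Complex.I + ((-(m / K) : ℤ):ℂ) * (2*(π:ℂ)*Complex.I) := by
              push_cast; try ring
      rw [harg, Complex.exp_add, Complex.exp_int_mul_two_pi_mul_I, mul_one]
  refine ⟨v, hvroot, ?_⟩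
  -- rotated point
  have hre : ∀ β : ℝ, (z * Complex.exp (((-β : ℝ):ℂ)*Complex.I)).re = r * Real.cos (θ - β) := by
    intro β
    conv_lhs => rw [← Complex.norm_mul_exp_arg_mul_I z]
    rw [mul_assoc, ← Complex.exp_add, ← hθdef, ← hrdef]
    have h7 : (θ:ℂ)*Complex.I + ((-β : ℝ):ℂ)*Complex.I = ((θ - β : ℝ):ℂ)*Complex.I := by
      push_cast; ring
    rw [h7, Complex.re_ofReal_mul, Complex.exp_ofReal_mul_I_re]
  set x : ℝ := r * Real.cos φ with hxdef
  set y : ℝ := r * |Real.sin φ| with hydef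
  have hy0 : 0 ≤ y := mul_nonneg hr0 (abs_nonneg _)
  have hy2 : y^2 = (r * Real.sin φ)^2 := by simp [hydef, mul_pow, sq_abs]
  have hcirc : x^2 + y^2 = r^2 := by
    rw [hxdef, hy2]
    have := Real.sin_sq_add_cos_sq φ
    nlinarith [this]
  have hsec : r*c ≤ x := by
    rw [hxdef]
    have h8 : c ≤ Real.cos φ := by
      rw [← Real.cos_abs φ, hcdef]
      exact Real.cos_le_cos_of_nonneg_of_le_pi (abs_nonneg φ) hαπ.le hφabs
    exact mul_le_mul_of_nonneg_left h8 hr0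
  have hedge : x*c + y*s ≤ c := by
    by_cases hsφ : 0 ≤ Real.sin φ
    · have hhp := hull_halfplane K hK m 1 (Or.inl rfl) z hz
      have h9 := hre (2*π*m/K + 1*(π/K))
      rw [h9] at hhp
      have h10 : θ - (2*π*m/K + 1*(π/K)) = φ - π/K := by rw [hφdef]; ring
      rw [h10, Real.cos_sub] at hhp
      have h11 : x*c + y*s = r * (Real.cos φ * c + Real.sin φ * s) := by
        rw [hxdef, hydef, _root_.abs_of_nonneg hsφ]; ring
      rw [h11]; rw [hcdef, hsdef]; linarith [hhp]
    · push_neg at hsφ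
      have hhp := hull_halfplane K hK m (-1) (Or.inr rfl) z hz
      have h9 := hre (2*π*m/K + (-1)*(π/K))
      rw [h9] at hhp
      have h10 : θ - (2*π*m/K + (-1)*(π/K)) = φ + π/K := by rw [hφdef]; ring
      rw [h10, Real.cos_add] at hhp
      have h11 : x*c + y*s = r * (Real.cos φ * c - Real.sin φ * s) := by
        rw [hxdef, hydef, _root_.abs_of_neg hsφ]; ring
      rw [h11]; rw [hcdef, hsdef]; linarith [hhp]
  have hkey := keyIneq c s x y r hc0 hc1 hs hcs hy0 hr0 hr1 hcirc hsec hedge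
  -- |v - z| = sqrt ((1-x)^2 + y^2)
  have hw : z * Complex.exp (((-(2*π*m/K) : ℝ):ℂ)*Complex.I)
      = (r:ℂ) * Complex.exp (((φ:ℝ):ℂ)*Complex.I) := by
    conv_lhs => rw [← Complex.norm_mul_exp_arg_mul_I z]
    rw [mul_assoc, ← Complex.exp_add, ← hθdef, ← hrdef]
    have h7 : (θ:ℂ)*Complex.I + ((-(2*π*m/K) : ℝ):ℂ)*Complex.I = ((φ:ℝ):ℂ)*Complex.I := by
      rw [hφdef]; push_cast; ring
    rw [h7]
  have hvz : v - z = v * (1 - z * Complex.exp (((-(2*π*m/K) : ℝ):ℂ)*Complex.I)) := by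
    have hvv : v * Complex.exp (((-(2*π*m/K) : ℝ):ℂ)*Complex.I) = 1 := by
      rw [hvdef, ← Complex.exp_add]
      have : ((2*π*m/K : ℝ):ℂ) * Complex.I + ((-(2*π*m/K) : ℝ):ℂ)*Complex.I = 0 := by
        push_cast; ring
      rw [this, Complex.exp_zero]
    calc v - z = v * 1 - v * (z * Complex.exp (((-(2*π*m/K) : ℝ):ℂ)*Complex.I)) := by
          rw [mul_one]; congr 1
          rw [show v * (z * Complex.exp (((-(2*π*m/K) : ℝ):ℂ)*Complex.I))
              = z * (v * Complex.exp (((-(2*π*m/K) : ℝ):ℂ)*Complex.I)) by ring, hvv, mul_one]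
      _ = v * (1 - z * Complex.exp (((-(2*π*m/K) : ℝ):ℂ)*Complex.I)) := by ring
  have habs : ‖v - z‖ = Real.sqrt ((1-x)^2 + y^2) := by
    rw [hvz, norm_mul]
    have hav : ‖v‖ = 1 := by rw [hvdef]; exact Complex.norm_exp_ofReal_mul_I _
    rw [hav, one_mul, hw]
    rw [Complex.norm_def, Complex.normSq_apply]
    congr 1
    have hre2 : (1 - (r:ℂ) * Complex.exp (((φ:ℝ):ℂ)*Complex.I)).re = 1 - x := by
      simp [Complex.sub_re, Complex.re_ofReal_mul, Complex.exp_ofReal_mul_I_re, hxdef]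
    have him2 : (1 - (r:ℂ) * Complex.exp (((φ:ℝ):ℂ)*Complex.I)).im = -(r * Real.sin φ) := by
      simp [Complex.sub_im, Complex.im_ofReal_mul, Complex.exp_ofReal_mul_I_im]
    rw [hre2, him2]
    rw [hy2]; ring
  rw [habs]
  exact hkey

end AuxGeom



lemma CSsum {ι : Type*} [Fintype ι] (f : ι → ℝ) (hf : ∀ i, 0 ≤ f i) :
    ∑ i, f i ≤ Real.sqrt (Fintype.card ι) * Real.sqrt (∑ i, (f i)^2) := by
  have h := sq_sum_le_card_mul_sum_sq (s := (Finset.univ : Finset ι)) (f := f)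
  have h0 : 0 ≤ ∑ i, f i := Finset.sum_nonneg fun i _ => hf i
  have h1 : (∑ i, f i) = Real.sqrt ((∑ i, f i)^2) := (Real.sqrt_sq h0).symm
  rw [h1, ← Real.sqrt_mul (by positivity)]
  apply Real.sqrt_le_sqrt
  simpa [Finset.card_univ] using h

lemma quadForm_rank_one {N : ℕ} (a x : Fin (N + 1) → ℂ) :
    quadForm (Matrix.vecMulVec a (star a)) x
      = Complex.normSq (∑ i, (starRingEnd ℂ) (a i) * x i) := by
  have h : dotProduct (star x) (Matrix.mulVec (Matrix.vecMulVec a (star a)) x)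
      = (starRingEnd ℂ) (∑ i, (starRingEnd ℂ) (a i) * x i) * (∑ i, (starRingEnd ℂ) (a i) * x i) := by
    rw [map_sum, Finset.sum_mul_sum]
    simp only [dotProduct, Matrix.mulVec, Matrix.vecMulVec_apply, Pi.star_apply,
      RingHom.map_mul, RingHomCompTriple.comp_apply, RingHom.id_apply, Finset.mul_sum]
    apply Finset.sum_congr rfl; intro i _
    apply Finset.sum_congr rfl; intro j _
    simp only [RCLike.star_def]
    ring
  rw [quadForm, h, ← Complex.normSq_eq_conj_mul_self]
  simp

lemma frobNorm_nonneg {N : ℕ} (M : Matrix (Fin (N + 1)) (Fin (N + 1)) ℂ) :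
    0 ≤ frobNorm M := Real.sqrt_nonneg _

lemma col_sum_le {N : ℕ} (M : Matrix (Fin (N + 1)) (Fin (N + 1)) ℂ) (n : Fin (N + 1)) :
    ∑ i, ‖M i n‖ ≤ Real.sqrt ((N:ℝ)+1) * frobNorm M := by
  have h := CSsum (fun i : Fin (N+1) => ‖M i n‖) (fun i => norm_nonneg _)
  have h2 : Real.sqrt (∑ i, (‖M i n‖)^2) ≤ frobNorm M := by
    apply Real.sqrt_le_sqrt
    apply Finset.sum_le_sum
    intro i _
    exact Finset.single_le_sum (f := fun j => ‖M i j‖ ^ 2)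
      (fun j _ => by positivity) (Finset.mem_univ n)
  calc ∑ i, ‖M i n‖ ≤ Real.sqrt (Fintype.card (Fin (N+1)))
        * Real.sqrt (∑ i, (‖M i n‖)^2) := h
    _ ≤ Real.sqrt ((N:ℝ)+1) * frobNorm M := by
        apply mul_le_mul _ h2 (Real.sqrt_nonneg _) (Real.sqrt_nonneg _)
        simp [Fintype.card_fin]

lemma row_sum_le {N : ℕ} (M : Matrix (Fin (N + 1)) (Fin (N + 1)) ℂ) (n : Fin (N + 1)) :
    ∑ j, ‖M n j‖ ≤ Real.sqrt ((N:ℝ)+1) * frobNorm M := by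
  have h := CSsum (fun j : Fin (N+1) => ‖M n j‖) (fun j => norm_nonneg _)
  have h2 : Real.sqrt (∑ j, (‖M n j‖)^2) ≤ frobNorm M := by
    apply Real.sqrt_le_sqrt
    exact Finset.single_le_sum (f := fun i => ∑ j, ‖M i j‖ ^ 2)
      (fun i _ => by positivity) (Finset.mem_univ n)
  calc ∑ j, ‖M n j‖ ≤ Real.sqrt (Fintype.card (Fin (N+1)))
        * Real.sqrt (∑ j, (‖M n j‖)^2) := h
    _ ≤ Real.sqrt ((N:ℝ)+1) * frobNorm M := by
        apply mul_le_mul _ h2 (Real.sqrt_nonneg _) (Real.sqrt_nonneg _)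
        simp [Fintype.card_fin]

lemma quadForm_le {N : ℕ} (M : Matrix (Fin (N + 1)) (Fin (N + 1)) ℂ)
    (x : Fin (N + 1) → ℂ) (hx : ∀ i, ‖x i‖ ≤ 1) :
    quadForm M x ≤ ((N:ℝ)+1) * frobNorm M := by
  have hdot : dotProduct (star x) (Matrix.mulVec M x)
      = ∑ i, ∑ j, star (x i) * M i j * x j := by
    simp [dotProduct, Matrix.mulVec, Finset.mul_sum, mul_assoc]
  have h1 : quadForm M x ≤ ‖∑ i, ∑ j, star (x i) * M i j * x j‖ := by
    rw [quadForm, hdot]; exact Complex.re_le_norm _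
  have h2 : ‖∑ i, ∑ j, star (x i) * M i j * x j‖
      ≤ ∑ i, ∑ j, ‖M i j‖ := by
    calc ‖∑ i, ∑ j, star (x i) * M i j * x j‖
        ≤ ∑ i, ‖∑ j, star (x i) * M i j * x j‖ := norm_sum_le _ _
      _ ≤ ∑ i, ∑ j, ‖star (x i) * M i j * x j‖ :=
          Finset.sum_le_sum (fun i _ => norm_sum_le _ _)
      _ ≤ ∑ i, ∑ j, ‖M i j‖ := by
          apply Finset.sum_le_sum; intro i _
          apply Finset.sum_le_sum; intro j _
          rw [norm_mul, norm_mul]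
          have hsx : ‖star (x i)‖ ≤ 1 := by
            rw [RCLike.star_def, Complex.norm_conj]; exact hx i
          calc ‖star (x i)‖ * ‖M i j‖ * ‖x j‖
              ≤ 1 * ‖M i j‖ * 1 :=
                mul_le_mul (mul_le_mul hsx le_rfl (norm_nonneg _)
                  (le_trans (norm_nonneg _) hsx)) (hx j) (norm_nonneg _)
                  (by positivity)
            _ = ‖M i j‖ := by ring
  have h3 : ∑ i, ∑ j, ‖M i j‖ ≤ ((N:ℝ)+1) * frobNorm M := by
    rw [← Finset.sum_product' (s := Finset.univ) (t := Finset.univ)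
      (f := fun i j => ‖M i j‖)]
    have h := CSsum (fun p : Fin (N+1) × Fin (N+1) => ‖M p.1 p.2‖)
      (fun p => norm_nonneg _)
    have hcard : Real.sqrt (Fintype.card (Fin (N+1) × Fin (N+1))) = (N:ℝ)+1 := by
      rw [Fintype.card_prod, Fintype.card_fin]
      rw [show (((N+1) * (N+1) : ℕ) : ℝ) = ((N:ℝ)+1)^2 by push_cast; ring]
      exact Real.sqrt_sq (by positivity)
    have hsum : Real.sqrt (∑ p : Fin (N+1) × Fin (N+1), (‖M p.1 p.2‖)^2)
        = frobNorm M := by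
      rw [frobNorm]
      congr 1
      rw [← Finset.sum_product' (s := Finset.univ) (t := Finset.univ)
        (f := fun i j => ‖M i j‖ ^ 2), Finset.univ_product_univ]
    calc ∑ p : Fin (N+1) × Fin (N+1), ‖M p.1 p.2‖
        ≤ Real.sqrt (Fintype.card (Fin (N+1) × Fin (N+1)))
          * Real.sqrt (∑ p : Fin (N+1) × Fin (N+1), (‖M p.1 p.2‖)^2) := h
      _ = ((N:ℝ)+1) * frobNorm M := by rw [hcard, hsum]
  linarith

lemma quadForm_diff {N : ℕ} (M : Matrix (Fin (N + 1)) (Fin (N + 1)) ℂ)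
    (x y : Fin (N + 1) → ℂ) (n : Fin (N + 1))
    (hx : ∀ i, ‖x i‖ ≤ 1) (hy : ∀ i, ‖y i‖ ≤ 1)
    (hxy : ∀ i, i ≠ n → x i = y i) :
    quadForm M x - quadForm M y
      ≤ 2 * Real.sqrt ((N:ℝ)+1) * frobNorm M * ‖x n - y n‖ := by
  set d : ℂ := x n - y n with hd
  have hdot : ∀ z : Fin (N+1) → ℂ, dotProduct (star z) (Matrix.mulVec M z)
      = ∑ i, ∑ j, star (z i) * M i j * z j := by
    intro z
    simp [dotProduct, Matrix.mulVec, Finset.mul_sum, mul_assoc]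
  have hident : dotProduct (star x) (Matrix.mulVec M x)
      - dotProduct (star y) (Matrix.mulVec M y)
      = (∑ i, star (x i) * M i n) * d + star d * (∑ j, M n j * y j) := by
    rw [hdot x, hdot y]
    have hterm : ∀ i j, star (x i) * M i j * x j - star (y i) * M i j * y j
        = (if j = n then star (x i) * M i n * d else 0)
          + (if i = n then star d * (M n j * y j) else 0) := by
      intro i j
      by_cases hj : j = n <;> by_cases hi : i = n
      · subst hj; subst hi; simp only [if_true, hd]; push_cast [star_sub]; ring
      · subst hj
        rw [if_pos rfl, if_neg hi, hxy i hi, hd]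
        ring
      · subst hi
        rw [if_neg hj, if_pos rfl, hxy j hj, hd]
        push_cast [star_sub]; ring
      · rw [if_neg hj, if_neg hi, hxy i hi, hxy j hj]; ring
    calc (∑ i, ∑ j, star (x i) * M i j * x j) - ∑ i, ∑ j, star (y i) * M i j * y j
        = ∑ i, ∑ j, (star (x i) * M i j * x j - star (y i) * M i j * y j) := by
          rw [← Finset.sum_sub_distrib]
          apply Finset.sum_congr rfl; intro i _
          rw [← Finset.sum_sub_distrib]
      _ = ∑ i, ∑ j, ((if j = n then star (x i) * M i n * d else 0)
          + (if i = n then star d * (M n j * y j) else 0)) := by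
          apply Finset.sum_congr rfl; intro i _
          apply Finset.sum_congr rfl; intro j _
          exact hterm i j
      _ = (∑ i, star (x i) * M i n) * d + star d * (∑ j, M n j * y j) := by
          have hsplit : ∀ i, (∑ j, ((if j = n then star (x i) * M i n * d else 0)
              + (if i = n then star d * (M n j * y j) else 0)))
              = star (x i) * M i n * d
                + (if i = n then star d * ∑ j, (M n j * y j) else 0) := by
            intro i
            rw [Finset.sum_add_distrib,
              Finset.sum_ite_eq' Finset.univ n (fun _ => star (x i) * M i n * d)]
            simp only [Finset.mem_univ, if_true]
            congr 1
            split_ifs with hi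
            · rw [Finset.mul_sum]
            · simp
          rw [Finset.sum_congr rfl (fun i _ => hsplit i), Finset.sum_add_distrib,
            Finset.sum_ite_eq' Finset.univ n (fun _ => star d * ∑ j, (M n j * y j)),
            Finset.sum_mul]
          simp
  have hA : ‖∑ i, star (x i) * M i n‖ ≤ Real.sqrt ((N:ℝ)+1) * frobNorm M := by
    calc ‖∑ i, star (x i) * M i n‖ ≤ ∑ i, ‖star (x i) * M i n‖ :=
        norm_sum_le _ _
      _ ≤ ∑ i, ‖M i n‖ := by
          apply Finset.sum_le_sum; intro i _
          rw [norm_mul]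
          have hsx : ‖star (x i)‖ ≤ 1 := by
            rw [RCLike.star_def, Complex.norm_conj]; exact hx i
          nlinarith [norm_nonneg (M i n), norm_nonneg (star (x i))]
      _ ≤ Real.sqrt ((N:ℝ)+1) * frobNorm M := col_sum_le M n
  have hB : ‖∑ j, M n j * y j‖ ≤ Real.sqrt ((N:ℝ)+1) * frobNorm M := by
    calc ‖∑ j, M n j * y j‖ ≤ ∑ j, ‖M n j * y j‖ :=
        norm_sum_le _ _
      _ ≤ ∑ j, ‖M n j‖ := by
          apply Finset.sum_le_sum; intro j _
          rw [norm_mul]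
          nlinarith [norm_nonneg (M n j), norm_nonneg (y j), hy j]
      _ ≤ Real.sqrt ((N:ℝ)+1) * frobNorm M := row_sum_le M n
  have habs : quadForm M x - quadForm M y
      ≤ ‖(∑ i, star (x i) * M i n) * d‖ + ‖star d * (∑ j, M n j * y j)‖ := by
    rw [quadForm, quadForm, ← Complex.sub_re, hident]
    calc ((∑ i, star (x i) * M i n) * d + star d * (∑ j, M n j * y j)).re
        ≤ ‖(∑ i, star (x i) * M i n) * d + star d * (∑ j, M n j * y j)‖ :=
          Complex.re_le_norm _
      _ ≤ _ := norm_add_le _ _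
  have hds : ‖star d‖ = ‖d‖ := by
    rw [RCLike.star_def, Complex.norm_conj]
  calc quadForm M x - quadForm M y
      ≤ ‖(∑ i, star (x i) * M i n) * d‖
        + ‖star d * (∑ j, M n j * y j)‖ := habs
    _ = ‖∑ i, star (x i) * M i n‖ * ‖d‖
        + ‖d‖ * ‖∑ j, M n j * y j‖ := by
        rw [norm_mul, norm_mul, hds]
    _ ≤ (Real.sqrt ((N:ℝ)+1) * frobNorm M) * ‖d‖
        + ‖d‖ * (Real.sqrt ((N:ℝ)+1) * frobNorm M) := by
        have h1 := mul_le_mul_of_nonneg_right hA (norm_nonneg d)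
        have h2 := mul_le_mul_of_nonneg_left hB (norm_nonneg d)
        linarith
    _ = 2 * Real.sqrt ((N:ℝ)+1) * frobNorm M * ‖d‖ := by ring



lemma quadForm_zero {N : ℕ} (x : Fin (N+1) → ℂ) : quadForm (0 : Matrix (Fin (N+1)) (Fin (N+1)) ℂ) x = 0 := by
  simp [quadForm, Matrix.zero_mulVec]

lemma quadForm_add {N : ℕ} (M₁ M₂ : Matrix (Fin (N+1)) (Fin (N+1)) ℂ) (x : Fin (N+1) → ℂ) :
    quadForm (M₁ + M₂) x = quadForm M₁ x + quadForm M₂ x := by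
  simp [quadForm, Matrix.add_mulVec, dotProduct_add]

lemma quadForm_sum {N : ℕ} {ι : Type*} (s : Finset ι)
    (Cf : ι → Matrix (Fin (N+1)) (Fin (N+1)) ℂ) (x : Fin (N+1) → ℂ) :
    quadForm (∑ u' ∈ s, Cf u') x = ∑ u' ∈ s, quadForm (Cf u') x := by
  classical
  induction s using Finset.induction_on with
  | empty => simp [quadForm_zero]
  | insert _ _ h ih =>
    rw [Finset.sum_insert h, Finset.sum_insert h, quadForm_add, ih]

lemma fObj_lip {N U : ℕ} (a : Fin U → Fin U → (Fin (N + 1) → ℂ))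
    (C : Fin U → Fin U → Matrix (Fin (N + 1)) (Fin (N + 1)) ℂ)
    (hC : ∀ u u' : Fin U, C u u' = Matrix.vecMulVec (a u u') (star (a u u')))
    (σ : Fin U → ℝ) (hσ : ∀ u, 0 < σ u) (u : Fin U)
    (x y : Fin (N + 1) → ℂ) (n : Fin (N + 1))
    (hx : ∀ i, ‖x i‖ ≤ 1) (hy : ∀ i, ‖y i‖ ≤ 1)
    (hxy : ∀ i, i ≠ n → x i = y i) :
    fObj C σ u x - fObj C σ u y ≤ Lconst C σ u * ‖x n - y n‖ := by
  set S := Real.sqrt ((N:ℝ)+1) with hS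
  set δ := ‖x n - y n‖ with hδ
  have hδ0 : 0 ≤ δ := norm_nonneg _
  have hS0 : 0 ≤ S := Real.sqrt_nonneg _
  set F := frobNorm (C u u) with hF
  set G := frobNorm (∑ u' ∈ Finset.univ.erase u, C u u') with hG
  have hF0 : 0 ≤ F := frobNorm_nonneg _
  have hG0 : 0 ≤ G := frobNorm_nonneg _
  have hq0 : ∀ (u' : Fin U) (z : Fin (N+1) → ℂ), 0 ≤ quadForm (C u u') z := by
    intro u' z
    rw [hC u u', quadForm_rank_one]
    exact Complex.normSq_nonneg _
  set Px := quadForm (C u u) x with hPx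
  set Py := quadForm (C u u) y with hPy
  set Dx := (∑ u' ∈ Finset.univ.erase u, quadForm (C u u') x) + σ u ^ 2 with hDx
  set Dy := (∑ u' ∈ Finset.univ.erase u, quadForm (C u u') y) + σ u ^ 2 with hDy
  have hσ2 : 0 < σ u ^ 2 := pow_pos (hσ u) 2
  have hDxσ : σ u ^ 2 ≤ Dx := by
    rw [hDx]
    have : 0 ≤ ∑ u' ∈ Finset.univ.erase u, quadForm (C u u') x :=
      Finset.sum_nonneg fun u' _ => hq0 u' x
    linarith
  have hDyσ : σ u ^ 2 ≤ Dy := by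
    rw [hDy]
    have : 0 ≤ ∑ u' ∈ Finset.univ.erase u, quadForm (C u u') y :=
      Finset.sum_nonneg fun u' _ => hq0 u' y
    linarith
  have hDxpos : 0 < Dx := lt_of_lt_of_le hσ2 hDxσ
  have hDypos : 0 < Dy := lt_of_lt_of_le hσ2 hDyσ
  have hPy0 : 0 ≤ Py := hq0 u y
  have hΔP : Px - Py ≤ 2*S*F*δ := quadForm_diff (C u u) x y n hx hy hxy
  have hΔD1 : Dx - Dy ≤ 2*S*G*δ := by
    rw [hDx, hDy]
    have h1 := quadForm_diff (∑ u' ∈ Finset.univ.erase u, C u u') x y n hx hy hxy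
    rw [quadForm_sum, quadForm_sum] at h1
    linarith
  have hΔD2 : Dy - Dx ≤ 2*S*G*δ := by
    rw [hDx, hDy]
    have h1 := quadForm_diff (∑ u' ∈ Finset.univ.erase u, C u u') y x n hy hx
      (fun i hi => (hxy i hi).symm)
    rw [quadForm_sum, quadForm_sum] at h1
    rw [show ‖y n - x n‖ = δ by rw [hδ, norm_sub_rev]] at h1
    linarith
  have hPyB : Py ≤ ((N:ℝ)+1)*F := quadForm_le (C u u) y hy
  have hfx : fObj C σ u x = Px / Dx := rfl
  have hfy : fObj C σ u y = Py / Dy := rfl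
  rw [hfx, hfy, div_sub_div Px Py (ne_of_gt hDxpos) (ne_of_gt hDypos)]
  have hnum : Px * Dy - Dx * Py ≤ (2*S*F*δ)*Dy + Py*(2*S*G*δ) := by
    nlinarith [mul_le_mul_of_nonneg_right hΔP hDypos.le,
      mul_le_mul_of_nonneg_left hΔD2 hPy0]
  have hstep1 : (Px * Dy - Dx * Py) / (Dx * Dy)
      ≤ ((2*S*F*δ)*Dy + Py*(2*S*G*δ)) / (Dx * Dy) := by
    exact (div_le_div_iff_of_pos_right (mul_pos hDxpos hDypos)).mpr hnum
  have hsplit : ((2*S*F*δ)*Dy + Py*(2*S*G*δ)) / (Dx * Dy)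
      = (2*S*F*δ)/Dx + (Py*(2*S*G*δ))/(Dx*Dy) := by
    rw [add_div, mul_div_mul_right _ _ (ne_of_gt hDypos)]
  have hN1 : (0:ℝ) ≤ (N:ℝ)+1 := by positivity
  have h2SGδ : (0:ℝ) ≤ 2*S*G*δ := by
    apply mul_nonneg (mul_nonneg (by linarith) hG0) hδ0
  have h2SFδ : (0:ℝ) ≤ 2*S*F*δ := by
    apply mul_nonneg (mul_nonneg (by linarith) hF0) hδ0
  have hb1 : (2*S*F*δ)/Dx ≤ (2*S*F*δ)/(σ u^2) :=
    div_le_div_of_nonneg_left h2SFδ hσ2 hDxσ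
  have hb2 : (Py*(2*S*G*δ))/(Dx*Dy) ≤ (((N:ℝ)+1)*F*(2*S*G*δ))/((σ u^2)*(σ u^2)) := by
    apply div_le_div₀ (mul_nonneg (mul_nonneg hN1 hF0) h2SGδ)
      (mul_le_mul_of_nonneg_right hPyB h2SGδ) (mul_pos hσ2 hσ2)
      (mul_le_mul hDxσ hDyσ hσ2.le hDxpos.le)
  have hLc : Lconst C σ u = 2*S*F/σ u^2 * (1 + ((N:ℝ)+1)*G/σ u^2) := rfl
  have hfinal : (2*S*F*δ)/(σ u^2) + (((N:ℝ)+1)*F*(2*S*G*δ))/((σ u^2)*(σ u^2))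
      = Lconst C σ u * δ := by
    rw [hLc]
    have hσne := (hσ u).ne'
    field_simp
  linarith

lemma Lconst_nonneg {N U : ℕ} (C : Fin U → Fin U → Matrix (Fin (N + 1)) (Fin (N + 1)) ℂ)
    (σ : Fin U → ℝ) (u : Fin U) : 0 ≤ Lconst C σ u := by
  have h1 : (0:ℝ) ≤ 2 * Real.sqrt ((N:ℝ)+1) * frobNorm (C u u) / σ u^2 :=
    div_nonneg (mul_nonneg (mul_nonneg (by norm_num) (Real.sqrt_nonneg _))
      (frobNorm_nonneg _)) (sq_nonneg _)
  have h2 : (0:ℝ) ≤ 1 + ((N:ℝ)+1) * frobNorm (∑ u' ∈ Finset.univ.erase u, C u u') / σ u^2 := by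
    have := div_nonneg (mul_nonneg (by positivity : (0:ℝ) ≤ (N:ℝ)+1)
      (frobNorm_nonneg (∑ u' ∈ Finset.univ.erase u, C u u'))) (sq_nonneg (σ u))
    linarith
  exact mul_nonneg h1 h2


lemma minObj_lip {N U : ℕ} (hU : 1 ≤ U) (a : Fin U → Fin U → (Fin (N + 1) → ℂ))
    (C : Fin U → Fin U → Matrix (Fin (N + 1)) (Fin (N + 1)) ℂ)
    (hC : ∀ u u' : Fin U, C u u' = Matrix.vecMulVec (a u u') (star (a u u')))
    (σ : Fin U → ℝ) (hσ : ∀ u, 0 < σ u)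
    (x y : Fin (N + 1) → ℂ) (n : Fin (N + 1))
    (hx : ∀ i, ‖x i‖ ≤ 1) (hy : ∀ i, ‖y i‖ ≤ 1)
    (hxy : ∀ i, i ≠ n → x i = y i) :
    minObj C σ x - minObj C σ y ≤ (⨆ u, Lconst C σ u) * ‖x n - y n‖ := by
  have hne : Nonempty (Fin U) := ⟨⟨0, by omega⟩⟩
  obtain ⟨u0, hu0⟩ := Finite.exists_min (fun u => fObj C σ u y)
  have h1 : minObj C σ y = fObj C σ u0 y :=
    le_antisymm (ciInf_le (Set.Finite.bddBelow (Set.finite_range _)) u0) (le_ciInf hu0)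
  have h2 : minObj C σ x ≤ fObj C σ u0 x :=
    ciInf_le (Set.Finite.bddBelow (Set.finite_range _)) u0
  have h3 := fObj_lip a C hC σ hσ u0 x y n hx hy hxy
  have h4 : Lconst C σ u0 ≤ ⨆ u, Lconst C σ u :=
    le_ciSup (Set.Finite.bddAbove (Set.finite_range _)) u0
  have h5 : Lconst C σ u0 * ‖x n - y n‖
      ≤ (⨆ u, Lconst C σ u) * ‖x n - y n‖ :=
    mul_le_mul_of_nonneg_right h4 (norm_nonneg _)
  linarith

lemma hull_abs_le (K : ℕ) (z : ℂ) (hz : z ∈ hullSet K) : ‖z‖ ≤ 1 := by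
  have hsub : hullSet K ⊆ Metric.closedBall 0 1 := by
    apply convexHull_min _ (convex_closedBall _ _)
    rintro u ⟨k, _, rfl⟩
    rw [Metric.mem_closedBall, dist_zero_right, 
      Complex.norm_exp_ofReal_mul_I]
  simpa [Metric.mem_closedBall, Complex.dist_eq] using hsub hz

lemma roots_abs (K : ℕ) (v : ℂ) (hv : v ∈ rootsSet K) : ‖v‖ = 1 := by
  obtain ⟨k, _, rfl⟩ := hv; exact Complex.norm_exp_ofReal_mul_I _

lemma feasA_abs_le (K N : ℕ) (x : Fin (N+1) → ℂ) (hx : x ∈ feasA K N) :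
    ∀ i, ‖x i‖ ≤ 1 := by
  intro i
  by_cases hi : i = 0
  · subst hi; rw [hx.1, norm_one]
  · exact hull_abs_le K _ (hx.2 i hi)

lemma norm1_update {N : ℕ} (x : Fin (N+1) → ℂ) (n : Fin (N+1)) (v : ℂ) :
    norm1 (Function.update x n v) = norm1 x - ‖x n‖ + ‖v‖ := by
  have h1 : norm1 (Function.update x n v)
      = ∑ i, Function.update (fun i => ‖x i‖) n (‖v‖) i := by
    apply Finset.sum_congr rfl; intro i _
    by_cases hi : i = n
    · subst hi; rw [Function.update_self, Function.update_self]
    · rw [Function.update_of_ne hi, Function.update_of_ne hi]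
  rw [h1, Finset.sum_update_of_mem (Finset.mem_univ n)]
  have h2 : norm1 x = ‖x n‖ + ∑ i ∈ Finset.univ \ {n}, ‖x i‖ := by
    rw [← Finset.erase_eq]
    exact (Finset.add_sum_erase _ _ (Finset.mem_univ n)).symm
  rw [h2]; ring

theorem stmt0
    (K N U : ℕ) (hK : 2 ≤ K) (hN : 1 ≤ N) (hU : 1 ≤ U)
    (a : Fin U → Fin U → (Fin (N + 1) → ℂ))
    (C : Fin U → Fin U → Matrix (Fin (N + 1)) (Fin (N + 1)) ℂ)
    (hC : ∀ u u' : Fin U, C u u' = Matrix.vecMulVec (a u u') (star (a u u')))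
    (σ : Fin U → ℝ) (hσ : ∀ u, 0 < σ u)
    (lam : ℝ)
    (hlam : Real.sin (Real.pi / K) / (1 - Real.cos (Real.pi / K)) * (⨆ u, Lconst C σ u) < lam)
    (xstar : Fin (N + 1) → ℂ) (hxA : xstar ∈ feasA K N)
    (hopt : ∀ x ∈ feasA K N, f0 C σ lam x ≤ f0 C σ lam xstar) :
    (∀ n : Fin (N + 1), n ≠ 0 → xstar n ∈ rootsSet K) ∧
      norm1 xstar = (N : ℝ) + 1 := by
  have hKpos : (0:ℝ) < K := by exact_mod_cast (show 0 < K by omega)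
  have hα : 0 < π/K := by positivity
  have hαπ2 : π/K ≤ π/2 := by
    apply div_le_div_of_nonneg_left Real.pi_pos.le (by norm_num) (by exact_mod_cast hK)
  have hαπ : π/K < π := lt_of_le_of_lt hαπ2 (by linarith [Real.pi_pos])
  have hs : 0 < Real.sin (π/K) := Real.sin_pos_of_pos_of_lt_pi hα hαπ
  have hc0 : 0 ≤ Real.cos (π/K) := Real.cos_nonneg_of_mem_Icc ⟨by linarith, hαπ2⟩
  have hcs : Real.cos (π/K)^2 + Real.sin (π/K)^2 = 1 := by
    rw [add_comm]; exact Real.sin_sq_add_cos_sq _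
  have hc1 : Real.cos (π/K) < 1 := by nlinarith
  have h1c : 0 < 1 - Real.cos (π/K) := by linarith
  have hne : Nonempty (Fin U) := ⟨⟨0, by omega⟩⟩
  have hLsup0 : 0 ≤ ⨆ u, Lconst C σ u := by
    have h4 : Lconst C σ ⟨0, by omega⟩ ≤ ⨆ u, Lconst C σ u :=
      le_ciSup (Set.Finite.bddAbove (Set.finite_range _)) _
    exact le_trans (Lconst_nonneg C σ _) h4
  have hlam0 : 0 < lam := by
    have h5 : 0 ≤ Real.sin (π/K) / (1 - Real.cos (π/K)) * (⨆ u, Lconst C σ u) :=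
      mul_nonneg (div_nonneg hs.le h1c.le) hLsup0
    linarith
  have hmain : ∀ n : Fin (N+1), n ≠ 0 → xstar n ∈ rootsSet K := by
    intro n hn
    by_contra hroot
    obtain ⟨v, hv, hgeom⟩ := geom K hK (xstar n) (hxA.2 n hn)
    have hvz : v ≠ xstar n := fun h => hroot (h ▸ hv)
    have hδpos : 0 < ‖v - xstar n‖ := norm_pos_iff.2 (sub_ne_zero.2 hvz)
    set x' : Fin (N+1) → ℂ := Function.update xstar n v with hx'
    have hx'A : x' ∈ feasA K N := by
      constructor
      · rw [hx', Function.update_of_ne (Ne.symm hn)]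
        exact hxA.1
      · intro i hi
        by_cases hin : i = n
        · subst hin; rw [hx', Function.update_self]; exact subset_convexHull ℝ _ hv
        · rw [hx', Function.update_of_ne hin]; exact hxA.2 i hi
    have hxb : ∀ i, ‖xstar i‖ ≤ 1 := feasA_abs_le K N xstar hxA
    have hx'b : ∀ i, ‖x' i‖ ≤ 1 := feasA_abs_le K N x' hx'A
    have hxy : ∀ i, i ≠ n → xstar i = x' i := fun i hi =>
      (Function.update_of_ne hi v xstar).symm
    have hminlip := minObj_lip hU a C hC σ hσ xstar x' n hxb hx'b hxy
    have hxn' : x' n = v := Function.update_self n v xstar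
    have habs' : ‖xstar n - x' n‖ = ‖v - xstar n‖ := by
      rw [hxn', norm_sub_rev]
    rw [habs'] at hminlip
    have hvabs : ‖v‖ = 1 := roots_abs K v hv
    have hnorm : norm1 x' = norm1 xstar - ‖xstar n‖ + 1 := by
      rw [hx', norm1_update, hvabs]
    have hgain : (⨆ u, Lconst C σ u) * ‖v - xstar n‖
        < lam * (1 - ‖xstar n‖) := by
      have hA : lam * ((1 - Real.cos (π/K)) * ‖v - xstar n‖)
          ≤ lam * (Real.sin (π/K) * (1 - ‖xstar n‖)) :=
        mul_le_mul_of_nonneg_left hgeom hlam0.le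
      have hB : Real.sin (π/K) * (⨆ u, Lconst C σ u) < lam * (1 - Real.cos (π/K)) := by
        have h6 := mul_lt_mul_of_pos_right hlam h1c
        have h7 : Real.sin (π/K) / (1 - Real.cos (π/K)) * (⨆ u, Lconst C σ u)
            * (1 - Real.cos (π/K)) = Real.sin (π/K) * (⨆ u, Lconst C σ u) := by
          field_simp
        rw [h7] at h6
        exact h6
      have hC2 := mul_lt_mul_of_pos_right hB hδpos
      have h8 : Real.sin (π/K) * ((⨆ u, Lconst C σ u) * ‖v - xstar n‖)
          < Real.sin (π/K) * (lam * (1 - ‖xstar n‖)) := by nlinarith [hC2, hA]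
      exact lt_of_mul_lt_mul_left h8 hs.le
    have hopt' := hopt x' hx'A
    have hf0x' : f0 C σ lam x' = minObj C σ x' + lam * norm1 x' := rfl
    have hf0xs : f0 C σ lam xstar = minObj C σ xstar + lam * norm1 xstar := rfl
    rw [hf0x', hf0xs] at hopt'
    have hlamnorm : lam * norm1 x' = lam * norm1 xstar
        + lam * (1 - ‖xstar n‖) := by rw [hnorm]; ring
    linarith
  refine ⟨hmain, ?_⟩
  have hn1 : norm1 xstar = ∑ i, ‖xstar i‖ := rfl
  rw [hn1]
  calc ∑ i, ‖xstar i‖ = ∑ _i : Fin (N+1), (1:ℝ) := by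
        apply Finset.sum_congr rfl
        intro i _
        by_cases hi : i = 0
        · subst hi; rw [hxA.1, norm_one]
        · exact roots_abs K _ (hmain i hi)
    _ = (N:ℝ)+1 := by simp
end
end

section
/- Let p ∈ frontier(conv(𝒳)) (the topological boundary of conv(𝒳) in ℂ), and let v ∈ 𝒳 be a nearest point of 𝒳 to p, i.e., |p − v| = min_{w ∈ 𝒳} |p − w|. Set t = |p − v|. Then 0 ≤ t ≤ sin(π/K) and |p|² = cos²(π/K) + (sin(π/K) − t)². -/
open Complex Finset

noncomputable section

def ang (K : ℕ) (m : ℤ) : ℝ := m * Real.pi / K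

def ee (K : ℕ) (m : ℤ) : ℂ := Complex.exp ((ang K m : ℝ) * Complex.I)

lemma ang_add (K : ℕ) (m n : ℤ) : ang K (m + n) = ang K m + ang K n := by
  unfold ang; push_cast; ring

lemma ee_mul (K : ℕ) (m n : ℤ) : ee K m * ee K n = ee K (m + n) := by
  unfold ee; rw [← Complex.exp_add, ang_add]; push_cast; ring_nf

lemma ee_re (K : ℕ) (m : ℤ) : (ee K m).re = Real.cos (ang K m) :=
  Complex.exp_ofReal_mul_I_re _

lemma ee_im (K : ℕ) (m : ℤ) : (ee K m).im = Real.sin (ang K m) :=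
  Complex.exp_ofReal_mul_I_im _

lemma abs_ee (K : ℕ) (m : ℤ) : ‖ee K m‖ = 1 :=
  Complex.norm_exp_ofReal_mul_I _

lemma conj_ee (K : ℕ) (m : ℤ) : (starRingEnd ℂ) (ee K m) = ee K (-m) := by
  unfold ee
  rw [← Complex.exp_conj]
  congr 1
  simp [Complex.conj_I, ang]
  ring

lemma ee_zero (K : ℕ) : ee K 0 = 1 := by
  simp [ee, ang]

lemma ee_full (K : ℕ) (hK : 0 < K) (q : ℤ) : ee K (2 * K * q) = 1 := by
  unfold ee
  have h : (ang K (2 * K * q) : ℂ) * Complex.I = (q : ℂ) * (2 * (Real.pi : ℂ) * Complex.I) := by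
    unfold ang
    have hK0 : (K : ℂ) ≠ 0 := Nat.cast_ne_zero.mpr hK.ne'
    push_cast
    field_simp
  rw [h, Complex.exp_int_mul_two_pi_mul_I]

lemma ee_shift (K : ℕ) (hK : 0 < K) (m : ℤ) (q : ℤ) : ee K (m + 2 * K * q) = ee K m := by
  rw [← ee_mul, ee_full K hK q, mul_one]

lemma ee_mod (K : ℕ) (hK : 0 < K) (m : ℤ) : ee K m = ee K (m % (2 * K)) := by
  conv_lhs => rw [← Int.emod_add_mul_ediv m (2 * K)]
  rw [show m % (2*K) + 2*K * (m / (2*K)) = m % (2*K) + 2*(K:ℤ) * (m / (2*K)) by push_cast; ring]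
  exact ee_shift K hK _ _

lemma cos_ang_mod (K : ℕ) (hK : 0 < K) (m : ℤ) :
    Real.cos (ang K m) = Real.cos (ang K (m % (2 * K))) := by
  rw [← ee_re, ← ee_re, ee_mod K hK m]

lemma ee_mem_rootsSet (K : ℕ) (hK : 0 < K) (j : ℤ) : ee K (2 * j) ∈ rootsSet K := by
  refine ⟨(j % K).toNat, ?_, ?_⟩
  · have h1 : 0 ≤ j % K := Int.emod_nonneg j (by exact_mod_cast hK.ne')
    have h2 : j % K < K := Int.emod_lt_of_pos j (by exact_mod_cast hK)
    omega
  · have hcast : ((j % K).toNat : ℤ) = j % K := Int.toNat_of_nonneg (Int.emod_nonneg j (by exact_mod_cast hK.ne'))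
    have : ee K (2 * j) = ee K (2 * (j % K)) := by
      conv_lhs => rw [show 2 * j = 2 * (j % K) + 2 * (K:ℤ) * (j / K) by
        conv_lhs => rw [← Int.emod_add_mul_ediv j K]
        ring]
      exact ee_shift K hK _ _
    rw [this]
    unfold ee ang
    congr 2
    rw [show ((((j % K).toNat : ℕ) : ℝ)) = ((j % (K:ℤ) : ℤ) : ℝ) by exact_mod_cast congrArg (Int.cast : ℤ → ℝ) hcast]
    push_cast
    ring

lemma mem_rootsSet_iff (K : ℕ) (z : ℂ) :
    z ∈ rootsSet K ↔ ∃ k : ℕ, k < K ∧ z = ee K (2 * k) := by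
  unfold rootsSet
  simp only [Set.mem_setOf_eq]
  refine exists_congr fun k => and_congr_right fun _ => ?_
  unfold ee ang
  constructor <;> intro h <;> rw [h] <;> congr 2 <;> push_cast <;> ring

lemma cos_window {a x : ℝ} (ha0 : 0 ≤ a) (hapi : a ≤ Real.pi) (h1 : a ≤ x)
    (h2 : x ≤ 2 * Real.pi - a) : Real.cos x ≤ Real.cos a := by
  rcases le_total x Real.pi with h | h
  · exact Real.cos_le_cos_of_nonneg_of_le_pi ha0 h h1
  · rw [← Real.cos_two_pi_sub]
    exact Real.cos_le_cos_of_nonneg_of_le_pi ha0 (by linarith) (by linarith)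

lemma ang_nonneg (K : ℕ) {m : ℤ} (hm : 0 ≤ m) : 0 ≤ ang K m := by
  unfold ang
  have : (0:ℝ) ≤ (m:ℝ) := by exact_mod_cast hm
  positivity

lemma ang_le_ang (K : ℕ) {m n : ℤ} (h : m ≤ n) : ang K m ≤ ang K n := by
  unfold ang
  have h' : (m:ℝ) ≤ (n:ℝ) := by exact_mod_cast h
  rcases Nat.eq_zero_or_pos K with rfl | hK
  · simp
  · have hKr : (0:ℝ) < K := by exact_mod_cast hK
    have hpi := Real.pi_pos
    have hmn : m * Real.pi ≤ n * Real.pi := by nlinarith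
    exact div_le_div_of_nonneg_right hmn hKr.le |>.trans_eq rfl


lemma ang_K (K : ℕ) (hK : 0 < K) : ang K K = Real.pi := by
  unfold ang
  have : (K:ℝ) ≠ 0 := by exact_mod_cast hK.ne'
  field_simp
  exact Int.cast_natCast K

lemma ang_two_K (K : ℕ) (hK : 0 < K) : ang K (2 * K) = 2 * Real.pi := by
  unfold ang
  have : (K:ℝ) ≠ 0 := by exact_mod_cast hK.ne'
  field_simp
  push_cast; ring

lemma ang_pos (K : ℕ) (hK : 0 < K) {m : ℤ} (hm : 0 < m) : 0 < ang K m := by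
  unfold ang
  have h1 : (0:ℝ) < (m:ℝ) := by exact_mod_cast hm
  have h2 : (0:ℝ) < (K:ℝ) := by exact_mod_cast hK
  have := Real.pi_pos
  positivity

lemma odd_cos (K : ℕ) (hK : 2 ≤ K) (d : ℤ) :
    Real.cos (ang K (2 * d - 1)) ≤ Real.cos (ang K 1) ∧
      (Real.cos (ang K (2 * d - 1)) = Real.cos (ang K 1) → d % K = 0 ∨ d % K = 1) := by
  have hK0 : 0 < K := by omega
  have hK2 : (0:ℤ) < 2 * K := by positivity
  set m := (2 * d - 1) % (2 * K) with hm
  have hmod := Int.emod_add_mul_ediv (2 * d - 1) (2 * K)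
  have h0 : 0 ≤ m := Int.emod_nonneg _ hK2.ne'
  have h1 : m < 2 * K := Int.emod_lt_of_pos _ hK2
  have hodd : m % 2 = 1 := by
    rw [hm, Int.emod_emod_of_dvd _ ⟨(K:ℤ), by ring⟩]
    omega
  have hrw : Real.cos (ang K (2 * d - 1)) = Real.cos (ang K m) := by
    rw [cos_ang_mod K hK0 (2 * d - 1)]
  rcases show m = 1 ∨ m = 2 * K - 1 ∨ (3 ≤ m ∧ m ≤ 2 * K - 3) by omega with h | h | h
  · constructor
    · rw [hrw, h]
    · intro _
      right
      set q := (2 * d - 1) / (2 * K) with hq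
      have hkq : (K:ℤ) * q = d - 1 := by rw [← hm, h] at hmod; linarith
      have : d = 1 + (K:ℤ) * q := by linarith
      rw [this, Int.add_mul_emod_self_left]
      exact Int.emod_eq_of_lt (by omega) (by exact_mod_cast hK)
  · have hang : ang K m = 2 * Real.pi - ang K 1 := by
      have : ang K m + ang K 1 = ang K (2 * K) := by
        rw [← ang_add]; congr 1; omega
      rw [ang_two_K K hK0] at this; linarith
    constructor
    · rw [hrw, hang, Real.cos_two_pi_sub]
    · intro _
      left
      set q := (2 * d - 1) / (2 * K) with hq
      have hkq : (K:ℤ) * (q + 1) = d := by rw [← hm, h] at hmod; linarith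
      rw [← hkq, Int.mul_emod_right]
  · have hK3 : 3 ≤ K := by omega
    have ha0 : 0 ≤ ang K 3 := ang_nonneg K (by omega)
    have ha3pi : ang K 3 ≤ Real.pi := by
      have := ang_le_ang K (show (3:ℤ) ≤ (K:ℤ) by exact_mod_cast hK3)
      rwa [ang_K K hK0] at this
    have hx1 : ang K 3 ≤ ang K m := ang_le_ang K h.1
    have hx2 : ang K m ≤ 2 * Real.pi - ang K 3 := by
      have h' : ang K m + ang K 3 ≤ ang K (2 * K) := by
        rw [← ang_add]; exact ang_le_ang K (by omega)
      rw [ang_two_K K hK0] at h'; linarith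
    have hle : Real.cos (ang K m) ≤ Real.cos (ang K 3) := cos_window ha0 ha3pi hx1 hx2
    have hlt : Real.cos (ang K 3) < Real.cos (ang K 1) := by
      apply Real.cos_lt_cos_of_nonneg_of_le_pi (ang_nonneg K (by omega)) ha3pi
      have h2 := ang_pos K hK0 (show (0:ℤ) < 2 by omega)
      have hadd : ang K 1 + ang K 2 = ang K 3 := by rw [← ang_add]; norm_num
      linarith
    constructor
    · rw [hrw]; linarith
    · intro heq; rw [hrw] at heq; linarith

lemma even_cos (K : ℕ) (hK : 2 ≤ K) (d : ℤ) (hd : d % K ≠ 0) :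
    Real.cos (ang K (2 * d)) ≤ Real.cos (ang K 2) := by
  have hK0 : 0 < K := by omega
  have hK2 : (0:ℤ) < 2 * K := by positivity
  set m := (2 * d) % (2 * K) with hm
  have hmod := Int.emod_add_mul_ediv (2 * d) (2 * K)
  have h0 : 0 ≤ m := Int.emod_nonneg _ hK2.ne'
  have h1 : m < 2 * K := Int.emod_lt_of_pos _ hK2
  have heven : m % 2 = 0 := by
    rw [hm, Int.emod_emod_of_dvd _ ⟨(K:ℤ), by ring⟩]
    omega
  have hne : m ≠ 0 := by
    intro h
    apply hd
    set q := (2 * d) / (2 * K) with hq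
    have : (K:ℤ) * q = d := by rw [← hm, h] at hmod; linarith
    rw [← this, Int.mul_emod_right]
  rw [cos_ang_mod K hK0 (2 * d)]
  rw [← hm]
  have ha0 : 0 ≤ ang K 2 := ang_nonneg K (by omega)
  have hapi : ang K 2 ≤ Real.pi := by
    have := ang_le_ang K (show (2:ℤ) ≤ (K:ℤ) by exact_mod_cast hK)
    rwa [ang_K K hK0] at this
  apply cos_window ha0 hapi (ang_le_ang K (by omega))
  have h' : ang K m + ang K 2 ≤ ang K (2 * K) := by
    rw [← ang_add]; exact ang_le_ang K (by omega)
  rw [ang_two_K K hK0] at h'; linarith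

lemma rootsSet_finite (K : ℕ) : (rootsSet K).Finite := by
  apply Set.Finite.subset (Set.finite_range (fun k : Fin K => ee K (2 * (k : ℕ))))
  intro z hz
  obtain ⟨k, hk, rfl⟩ := (mem_rootsSet_iff K z).mp hz
  exact ⟨⟨k, hk⟩, rfl⟩

lemma hullSet_closed (K : ℕ) : IsClosed (hullSet K) :=
  ((rootsSet_finite K).isCompact_convexHull (𝕜 := ℝ)).isClosed

lemma re_mul_linear (c : ℂ) : IsLinearMap ℝ (fun w : ℂ => (w * c).re) := by
  constructor
  · intro a b; simp [add_mul]
  · intro r a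
    simp [smul_mul_assoc, Complex.smul_re]
    ring

lemma hull_halfplane_s8 (K : ℕ) (hK : 2 ≤ K) (k : ℤ) {z : ℂ} (hz : z ∈ hullSet K) :
    (z * (starRingEnd ℂ) (ee K (2 * k + 1))).re ≤ Real.cos (ang K 1) := by
  set c := (starRingEnd ℂ) (ee K (2 * k + 1)) with hc
  have hsub : hullSet K ⊆ {w : ℂ | (w * c).re ≤ Real.cos (ang K 1)} := by
    apply convexHull_min ?_ (convex_halfSpace_le (re_mul_linear c) _)
    intro w hw
    obtain ⟨j, _, rfl⟩ := (mem_rootsSet_iff K w).mp hw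
    simp only [Set.mem_setOf_eq, hc, conj_ee, ee_mul]
    rw [show 2 * (j:ℤ) + -(2 * k + 1) = 2 * ((j:ℤ) - k) - 1 by ring, ee_re]
    exact (odd_cos K hK ((j:ℤ) - k)).1
  exact hsub hz

lemma tri (A B T : ℝ) :
    (Real.sin (B - T) : ℂ) * Complex.exp ((A:ℂ) * Complex.I) +
      (Real.sin (T - A) : ℂ) * Complex.exp ((B:ℂ) * Complex.I) =
      (Real.sin (B - A) : ℂ) * Complex.exp ((T:ℂ) * Complex.I) := by
  simp only [Complex.exp_mul_I, ← Complex.ofReal_cos, ← Complex.ofReal_sin]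
  apply Complex.ext <;>
    simp only [Complex.add_re, Complex.add_im, Complex.mul_re, Complex.mul_im,
      Complex.ofReal_re, Complex.ofReal_im, Complex.I_re, Complex.I_im,
      Real.sin_sub] <;> ring

lemma ee_pow (K : ℕ) (k : ℕ) : ee K (2 * k) = (ee K 2) ^ k := by
  unfold ee
  rw [← Complex.exp_nat_mul]
  congr 1
  unfold ang
  push_cast
  ring

lemma ee_two_ne_one (K : ℕ) (hK : 2 ≤ K) : ee K 2 ≠ 1 := by
  intro h
  have hre : (ee K 2).re = 1 := by rw [h]; simp
  rw [ee_re] at hre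
  have hK0 : 0 < K := by omega
  have h2 : 0 < ang K 2 := ang_pos K hK0 (by omega)
  have hpi : ang K 2 ≤ Real.pi := by
    have := ang_le_ang K (show (2:ℤ) ≤ (K:ℤ) by exact_mod_cast hK)
    rwa [ang_K K hK0] at this
  have := Real.cos_lt_cos_of_nonneg_of_le_pi le_rfl hpi h2
  rw [Real.cos_zero] at this
  linarith

lemma sum_roots (K : ℕ) (hK : 2 ≤ K) : ∑ k ∈ Finset.range K, ee K (2 * k) = 0 := by
  simp_rw [ee_pow]
  rw [geom_sum_eq (ee_two_ne_one K hK)]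
  have h1 : ee K 2 ^ K = 1 := by
    rw [← ee_pow]
    have := ee_full K (by omega) 1
    rwa [mul_one] at this
  simp [h1]

lemma zero_mem_hull (K : ℕ) (hK : 2 ≤ K) : (0:ℂ) ∈ hullSet K := by
  have h := Finset.centerMass_mem_convexHull (t := Finset.range K) (w := fun _ => (1:ℝ))
    (z := fun k : ℕ => ee K (2 * k)) (fun i _ => zero_le_one)
    (by simp; positivity) (fun i _ => ee_mem_rootsSet K (by omega) i)
  have hcm : (Finset.range K).centerMass (fun _ => (1:ℝ)) (fun k : ℕ => ee K (2 * k)) = 0 := by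
    rw [Finset.centerMass]
    simp [sum_roots K hK]
  rw [hcm] at h
  exact h

lemma ang_neg (K : ℕ) (m : ℤ) : ang K (-m) = - ang K m := by
  unfold ang; push_cast; ring

lemma re_ofReal_mul_exp (r x : ℝ) :
    ((r:ℂ) * Complex.exp ((x:ℂ) * Complex.I)).re = r * Real.cos x := by
  rw [Complex.re_ofReal_mul, Complex.exp_ofReal_mul_I_re]

lemma strict_mem_hull (K : ℕ) (hK : 3 ≤ K) (z : ℂ)
    (hz : ∀ k : ℤ, (z * (starRingEnd ℂ) (ee K (2 * k + 1))).re < Real.cos (ang K 1)) :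
    z ∈ hullSet K := by
  have hK0 : 0 < K := by omega
  have hKr : (0:ℝ) < K := by exact_mod_cast hK0
  have hpi := Real.pi_pos
  by_cases hz0 : z = 0
  · rw [hz0]; exact zero_mem_hull K (by omega)
  set r := ‖z‖ with hr
  have hr0 : 0 < r := norm_pos_iff.mpr hz0
  set θ := Complex.arg z with hθ
  have hzeq : (r:ℂ) * Complex.exp ((θ:ℂ) * Complex.I) = z := Complex.norm_mul_exp_arg_mul_I z
  set j : ℤ := ⌊θ * K / (2 * Real.pi)⌋ with hj
  have hfl1 : (j:ℝ) ≤ θ * K / (2 * Real.pi) := Int.floor_le _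
  have hfl2 : θ * K / (2 * Real.pi) < (j:ℝ) + 1 := Int.lt_floor_add_one _
  have h2pi : (0:ℝ) < 2 * Real.pi := by linarith
  have hA : ang K (2 * j) ≤ θ := by
    have h1 : (j:ℝ) * (2 * Real.pi) ≤ θ * K := (le_div_iff₀ h2pi).mp hfl1
    unfold ang
    rw [div_le_iff₀ hKr]
    push_cast
    linarith
  have hB : θ ≤ ang K (2 * j + 2) := by
    have h1 : θ * K < ((j:ℝ) + 1) * (2 * Real.pi) := (div_lt_iff₀ h2pi).mp hfl2
    unfold ang
    rw [le_div_iff₀ hKr]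
    push_cast
    linarith
  have hBA : ang K (2 * j + 2) - ang K (2 * j) = ang K 2 := by unfold ang; push_cast; ring
  have hang2 : ang K 2 = 2 * ang K 1 := by unfold ang; push_cast; ring
  have ha1pos : 0 < ang K 1 := ang_pos K hK0 one_pos
  have ha2pi : ang K 2 < Real.pi := by
    have hlt : ang K 2 + ang K (K - 2) = ang K K := by rw [← ang_add]; congr 1; omega
    have hpos : 0 < ang K (K - 2) := ang_pos K hK0 (by omega)
    rw [ang_K K hK0] at hlt
    linarith
  have hs0 : 0 < Real.sin (ang K 2) :=
    Real.sin_pos_of_pos_of_lt_pi (ang_pos K hK0 (by omega)) ha2pi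
  have ha1pi2 : ang K 1 < Real.pi / 2 := by rw [hang2] at ha2pi; linarith
  have hc1 : 0 < Real.cos (ang K 1) := Real.cos_pos_of_mem_Ioo ⟨by linarith, ha1pi2⟩
  have hsin1 : 0 < Real.sin (ang K 1) := by
    rw [hang2] at ha2pi
    exact Real.sin_pos_of_pos_of_lt_pi ha1pos (by linarith)
  set s := Real.sin (ang K 2) with hs
  set β := r * Real.sin (ang K (2 * j + 2) - θ) / s with hβ
  set γ := r * Real.sin (θ - ang K (2 * j)) / s with hγ
  have hβ0 : 0 ≤ β := by
    apply div_nonneg (mul_nonneg hr0.le ?_) hs0.le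
    apply Real.sin_nonneg_of_nonneg_of_le_pi (by linarith)
    have : ang K (2 * j + 2) - θ ≤ ang K 2 := by linarith [hBA, hA]
    linarith
  have hγ0 : 0 ≤ γ := by
    apply div_nonneg (mul_nonneg hr0.le ?_) hs0.le
    apply Real.sin_nonneg_of_nonneg_of_le_pi (by linarith)
    have : θ - ang K (2 * j) ≤ ang K 2 := by linarith [hBA, hB]
    linarith
  have key : (β:ℂ) * ee K (2 * j) + (γ:ℂ) * ee K (2 * j + 2) = z := by
    have htri := tri (ang K (2 * j)) (ang K (2 * j + 2)) θ
    rw [hBA] at htri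
    have step : (β:ℂ) * ee K (2 * j) + (γ:ℂ) * ee K (2 * j + 2) =
        (r / s : ℝ) * ((Real.sin (ang K (2 * j + 2) - θ) : ℂ) *
            Complex.exp ((ang K (2 * j) : ℂ) * Complex.I) +
          (Real.sin (θ - ang K (2 * j)) : ℂ) *
            Complex.exp ((ang K (2 * j + 2) : ℂ) * Complex.I)) := by
      rw [hβ, hγ]
      unfold ee
      simp only [Complex.ofReal_div, Complex.ofReal_mul]
      ring
    rw [step, htri, ← hs, ← hzeq, Complex.ofReal_div]
    have hsne : (s:ℂ) ≠ 0 := Complex.ofReal_ne_zero.mpr hs0.ne'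
    field_simp
  have hψ : ang K (2 * j + 1) - ang K 1 = ang K (2 * j) ∧
      ang K (2 * j + 1) + ang K 1 = ang K (2 * j + 2) := by
    constructor <;> (unfold ang; push_cast; ring)
  have hsum : β + γ < 1 := by
    have hre : (z * (starRingEnd ℂ) (ee K (2 * j + 1))).re =
        r * Real.cos (ang K (2 * j + 1) - θ) := by
      rw [← hzeq, conj_ee]
      have : (r:ℂ) * Complex.exp ((θ:ℂ) * Complex.I) * ee K (-(2 * j + 1)) =
          (r:ℂ) * Complex.exp (((θ - ang K (2 * j + 1) : ℝ) : ℂ) * Complex.I) := by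
        unfold ee
        rw [ang_neg, mul_assoc, ← Complex.exp_add]
        push_cast
        ring_nf
      rw [this, re_ofReal_mul_exp, ← Real.cos_neg]
      ring_nf
    have hlt := hz j
    rw [hre] at hlt
    -- β + γ = r * cos (ψ - θ) / cos (ang K 1)
    have hsin_id : Real.sin (ang K (2 * j + 2) - θ) + Real.sin (θ - ang K (2 * j)) =
        2 * Real.sin (ang K 1) * Real.cos (ang K (2 * j + 1) - θ) := by
      rw [← hψ.2, ← hψ.1]
      rw [show ang K (2 * j + 1) + ang K 1 - θ = (ang K (2 * j + 1) - θ) + ang K 1 by ring,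
        show θ - (ang K (2 * j + 1) - ang K 1) = -(ang K (2 * j + 1) - θ) + ang K 1 by ring,
        Real.sin_add, Real.sin_add, Real.sin_neg, Real.cos_neg]
      ring
    have hseq : s = 2 * Real.sin (ang K 1) * Real.cos (ang K 1) := by
      rw [hs, hang2, Real.sin_two_mul]
    have hβγ : β + γ = r * Real.cos (ang K (2 * j + 1) - θ) / Real.cos (ang K 1) := by
      rw [hβ, hγ, ← add_div, ← mul_add, hsin_id, hseq]
      field_simp
    rw [hβγ, div_lt_one hc1]
    exact hlt
  -- assemble
  have hconv : Convex ℝ (hullSet K) := convex_convexHull ℝ _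
  have hmem := hconv.sum_mem (t := (Finset.univ : Finset (Fin 3)))
    (w := ![β, γ, 1 - β - γ]) (z := ![ee K (2 * j), ee K (2 * j + 2), 0])
    (by
      intro i _
      fin_cases i <;> simp [hβ0, hγ0] <;> linarith)
    (by simp [Fin.sum_univ_three])
    (by
      intro i _
      fin_cases i
      · exact subset_convexHull ℝ (rootsSet K) (ee_mem_rootsSet K hK0 j)
      · show ee K (2 * j + 2) ∈ convexHull ℝ (rootsSet K)
        rw [show (2 * j + 2 : ℤ) = 2 * (j + 1) by ring]
        exact subset_convexHull ℝ (rootsSet K) (ee_mem_rootsSet K hK0 (j + 1))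
      · exact zero_mem_hull K (by omega))
  rw [Fin.sum_univ_three] at hmem
  simp only [Matrix.cons_val_zero, Matrix.cons_val_one, Matrix.head_cons,
    Matrix.cons_val_two, Matrix.tail_cons, smul_zero, add_zero] at hmem
  rw [Complex.real_smul, Complex.real_smul, key] at hmem
  exact hmem

lemma ee_odd_period (K : ℕ) (hK0 : 0 < K) (k : ℤ) :
    ee K (2 * k + 1) = ee K (2 * ((k % K).toNat : ℤ) + 1) := by
  have hcast : (((k % K).toNat : ℤ)) = k % K :=
    Int.toNat_of_nonneg (Int.emod_nonneg k (by exact_mod_cast hK0.ne'))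
  rw [hcast]
  conv_lhs => rw [show 2 * k + 1 = (2 * (k % K) + 1) + 2 * (K:ℤ) * (k / K) by
    conv_lhs => rw [← Int.emod_add_mul_ediv k K]
    ring]
  exact ee_shift K hK0 _ _

lemma frontier_facet (K : ℕ) (hK : 3 ≤ K) {p : ℂ} (hp : p ∈ frontier (hullSet K)) :
    p ∈ hullSet K ∧
      ∃ k : ℤ, (p * (starRingEnd ℂ) (ee K (2 * k + 1))).re = Real.cos (ang K 1) := by
  have hK0 : 0 < K := by omega
  have hclosed := hullSet_closed K
  have hmem : p ∈ hullSet K := by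
    have h := frontier_subset_closure hp
    rwa [hclosed.closure_eq] at h
  refine ⟨hmem, ?_⟩
  by_contra hno
  push_neg at hno
  have hstrict : ∀ k : ℤ, (p * (starRingEnd ℂ) (ee K (2 * k + 1))).re < Real.cos (ang K 1) :=
    fun k => lt_of_le_of_ne (hull_halfplane_s8 K (by omega) k hmem) (hno k)
  have hpint : p ∈ interior (hullSet K) := by
    rw [mem_interior]
    refine ⟨⋂ k ∈ Finset.range K, {w : ℂ |
      (w * (starRingEnd ℂ) (ee K (2 * (k:ℤ) + 1))).re < Real.cos (ang K 1)}, ?_, ?_, ?_⟩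
    · intro w hw
      simp only [Set.mem_iInter, Set.mem_setOf_eq, Finset.mem_range] at hw
      apply strict_mem_hull K hK w
      intro k
      rw [ee_odd_period K hK0 k]
      apply hw
      have h1 : 0 ≤ k % K := Int.emod_nonneg k (by exact_mod_cast hK0.ne')
      have h2 : k % K < K := Int.emod_lt_of_pos k (by exact_mod_cast hK0)
      omega
    · apply isOpen_biInter_finset
      intro k _
      have hcont : Continuous fun w : ℂ => (w * (starRingEnd ℂ) (ee K (2 * (k:ℤ) + 1))).re :=
        Complex.continuous_re.comp (continuous_mul_right _)
      exact isOpen_lt hcont continuous_const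
    · simp only [Set.mem_iInter, Set.mem_setOf_eq]
      intro k _
      exact hstrict k
  rw [frontier, Set.mem_diff] at hp
  exact hp.2 hpint

lemma ee_even_shift (K : ℕ) (hK0 : 0 < K) (j q : ℤ) :
    ee K (2 * (j + K * q)) = ee K (2 * j) := by
  rw [show 2 * (j + (K:ℤ) * q) = 2 * j + 2 * (K:ℤ) * q by ring]
  exact ee_shift K hK0 _ _

lemma edge_of_facet (K : ℕ) (hK : 2 ≤ K) {p : ℂ} (hmem : p ∈ hullSet K) (k : ℤ)
    (heq : (p * (starRingEnd ℂ) (ee K (2 * k + 1))).re = Real.cos (ang K 1)) :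
    ∃ a b : ℝ, 0 ≤ a ∧ 0 ≤ b ∧ a + b = 1 ∧
      p = (a:ℂ) * ee K (2 * k) + (b:ℂ) * ee K (2 * (k + 1)) := by
  have hK0 : 0 < K := by omega
  classical
  set F : Finset ℂ := (Finset.range K).image (fun j : ℕ => ee K (2 * j)) with hF
  have hFs : (F : Set ℂ) = rootsSet K := by
    ext w
    simp only [hF, Finset.coe_image, Finset.coe_range, Set.mem_image, Set.mem_Iio,
      mem_rootsSet_iff]
    constructor
    · rintro ⟨j, hj, rfl⟩; exact ⟨j, hj, rfl⟩
    · rintro ⟨j, hj, rfl⟩; exact ⟨j, hj, rfl⟩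
  rw [hullSet, ← hFs, Finset.mem_convexHull'] at hmem
  obtain ⟨w, hw0, hw1, hwp⟩ := hmem
  set c := (starRingEnd ℂ) (ee K (2 * k + 1)) with hc
  set cv := Real.cos (ang K 1) with hcv
  have hterm : ∀ y ∈ F, (y * c).re ≤ cv := by
    intro y hy
    obtain ⟨j, hj, rfl⟩ := Finset.mem_image.mp hy
    rw [hc, conj_ee, ee_mul,
      show 2 * (j:ℤ) + -(2 * k + 1) = 2 * ((j:ℤ) - k) - 1 by ring, ee_re]
    exact (odd_cos K hK ((j:ℤ) - k)).1
  have hsum_re : ∑ y ∈ F, w y * (y * c).re = cv := by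
    have h1 : p * c = ∑ y ∈ F, w y • (y * c) := by
      rw [← hwp, Finset.sum_mul]
      exact Finset.sum_congr rfl fun y _ => smul_mul_assoc _ _ _
    have h2 : (p * c).re = ∑ y ∈ F, w y * (y * c).re := by
      rw [h1, Complex.re_sum]
      exact Finset.sum_congr rfl fun y _ => by rw [Complex.smul_re, smul_eq_mul]
    rw [← h2, heq]
  have hzero : ∑ y ∈ F, w y * (cv - (y * c).re) = 0 := by
    have : ∑ y ∈ F, w y * (cv - (y * c).re) =
        (∑ y ∈ F, w y) * cv - ∑ y ∈ F, w y * (y * c).re := by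
      rw [Finset.sum_mul, ← Finset.sum_sub_distrib]
      exact Finset.sum_congr rfl fun y _ => by ring
    rw [this, hw1, hsum_re]
    ring
  have hall : ∀ y ∈ F, w y * (cv - (y * c).re) = 0 :=
    (Finset.sum_eq_zero_iff_of_nonneg fun y hy =>
      mul_nonneg (hw0 y hy) (sub_nonneg.mpr (hterm y hy))).mp hzero
  set A := ee K (2 * k) with hA
  set B := ee K (2 * (k + 1)) with hB
  have hABmul : A * ee K 2 = B := by rw [hA, hB, ee_mul]; congr 1; ring
  have hAB : A ≠ B := by
    intro h
    apply ee_two_ne_one K hK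
    have hA0 : A ≠ 0 := by
      intro h0
      have := abs_ee K (2 * k)
      rw [← hA, h0] at this
      simp at this
    have h2 : A * ee K 2 = A * 1 := by rw [mul_one, hABmul, ← h]
    exact mul_left_cancel₀ hA0 h2
  have hmemF : ∀ m : ℤ, ee K (2 * m) ∈ F := by
    intro m
    apply Finset.mem_image.mpr
    refine ⟨(m % K).toNat, Finset.mem_range.mpr ?_, ?_⟩
    · have h1 : 0 ≤ m % K := Int.emod_nonneg m (by exact_mod_cast hK0.ne')
      have h2 : m % K < K := Int.emod_lt_of_pos m (by exact_mod_cast hK0)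
      omega
    · have hcast : (((m % K).toNat : ℤ)) = m % K :=
        Int.toNat_of_nonneg (Int.emod_nonneg m (by exact_mod_cast hK0.ne'))
      rw [hcast]
      conv_rhs => rw [show m = m % K + (K:ℤ) * (m / K) by
        conv_lhs => rw [← Int.emod_add_mul_ediv m K]; ring]
      rw [ee_even_shift K hK0]
  have hsupp : ∀ y ∈ F, y ≠ A → y ≠ B → w y = 0 := by
    intro y hy hyA hyB
    obtain ⟨j, hj, rfl⟩ := Finset.mem_image.mp hy
    rcases mul_eq_zero.mp (hall _ hy) with h | h
    · exact h
    · exfalso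
      have hre : (ee K (2 * (j:ℤ)) * c).re = Real.cos (ang K (2 * ((j:ℤ) - k) - 1)) := by
        rw [hc, conj_ee, ee_mul,
          show 2 * (j:ℤ) + -(2 * k + 1) = 2 * ((j:ℤ) - k) - 1 by ring, ee_re]
      have heq2 : Real.cos (ang K (2 * ((j:ℤ) - k) - 1)) = cv := by
        rw [← hre]; linarith [sub_eq_zero.mp h]
      rcases (odd_cos K hK ((j:ℤ) - k)).2 heq2 with hd | hd
      · apply hyA
        have hdiv := Int.emod_add_mul_ediv ((j:ℤ) - k) K
        rw [hd] at hdiv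
        have : (j:ℤ) = k + (K:ℤ) * (((j:ℤ) - k) / K) := by linarith
        rw [this, ee_even_shift K hK0]
      · apply hyB
        have hdiv := Int.emod_add_mul_ediv ((j:ℤ) - k) K
        rw [hd] at hdiv
        have : (j:ℤ) = (k + 1) + (K:ℤ) * (((j:ℤ) - k) / K) := by linarith
        rw [this, ee_even_shift K hK0]
  have hABsub : ({A, B} : Finset ℂ) ⊆ F := by
    intro y hy
    rcases Finset.mem_insert.mp hy with rfl | hy
    · exact hmemF k
    · rw [Finset.mem_singleton.mp hy]; exact hmemF (k + 1)
  have hsum1 : w A + w B = 1 := by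
    rw [← hw1, ← Finset.sum_pair hAB]
    exact (Finset.sum_subset hABsub fun y hy hny => by
      simp only [Finset.mem_insert, Finset.mem_singleton, not_or] at hny
      exact hsupp y hy hny.1 hny.2)
  have hsum2 : p = w A • A + w B • B := by
    rw [← hwp, ← Finset.sum_pair (f := fun y => w y • y) hAB]
    exact (Finset.sum_subset hABsub fun y hy hny => by
      simp only [Finset.mem_insert, Finset.mem_singleton, not_or] at hny
      rw [hsupp y hy hny.1 hny.2, zero_smul]).symm
  refine ⟨w A, w B, hw0 A (hABsub (by simp)), hw0 B (hABsub (by simp)), hsum1, ?_⟩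
  rw [hsum2, Complex.real_smul, Complex.real_smul]

lemma edge_of_frontier (K : ℕ) (hK : 2 ≤ K) {p : ℂ} (hp : p ∈ frontier (hullSet K)) :
    ∃ (k : ℤ) (a b : ℝ), 0 ≤ a ∧ 0 ≤ b ∧ a + b = 1 ∧
      p = (a:ℂ) * ee K (2 * k) + (b:ℂ) * ee K (2 * (k + 1)) := by
  rcases eq_or_lt_of_le hK with hK2 | hK3
  · -- K = 2
    have hK2' : K = 2 := hK2.symm
    subst hK2'
    have hroots : rootsSet 2 = {ee 2 (2 * 0), ee 2 (2 * 1)} := by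
      ext z
      rw [mem_rootsSet_iff]
      constructor
      · rintro ⟨j, hj, rfl⟩
        interval_cases j
        · left; norm_num
        · right; norm_num
      · rintro (rfl | rfl)
        · exact ⟨0, by norm_num, by norm_num⟩
        · exact ⟨1, by norm_num, by norm_num⟩
    have hhull : hullSet 2 = segment ℝ (ee 2 (2 * 0)) (ee 2 (2 * 1)) := by
      rw [hullSet, hroots, convexHull_pair]
    have hmem : p ∈ hullSet 2 := by
      have h := frontier_subset_closure hp
      rwa [(hullSet_closed 2).closure_eq] at h
    rw [hhull] at hmem
    obtain ⟨a, b, ha, hb, hab, hz⟩ := hmem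
    exact ⟨0, a, b, ha, hb, hab, by
      rw [← hz, Complex.real_smul, Complex.real_smul]
      norm_num⟩
  · have hK3' : 3 ≤ K := hK3
    obtain ⟨hmem, k, heq⟩ := frontier_facet K hK3' hp
    obtain ⟨a, b, ha, hb, hab, hpeq⟩ := edge_of_facet K hK hmem k heq
    exact ⟨k, a, b, ha, hb, hab, hpeq⟩

lemma le_of_sq_le_sq'' {x y : ℝ} (h : x ^ 2 ≤ y ^ 2) (hy : 0 ≤ y) : x ≤ y := by
  by_contra hc
  push_neg at hc
  exact absurd h (not_le.mpr (pow_lt_pow_left₀ hc hy two_ne_zero))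

lemma eq_of_sq_eq {x y : ℝ} (h : x ^ 2 = y ^ 2) (hx : 0 ≤ x) (hy : 0 ≤ y) : x = y :=
  le_antisymm (le_of_sq_le_sq'' h.le hy) (le_of_sq_le_sq'' h.ge hx)

lemma main_calc (K : ℕ) (hK : 2 ≤ K) (p v : ℂ) (hv : v ∈ rootsSet K)
    (hnear : ∀ w ∈ rootsSet K, ‖p - v‖ ≤ ‖p - w‖)
    (k : ℤ) (a b : ℝ) (ha : 0 ≤ a) (hb : 0 ≤ b) (hab : a + b = 1)
    (hpeq : p = (a:ℂ) * ee K (2 * k) + (b:ℂ) * ee K (2 * (k + 1))) :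
    ‖p - v‖ ≤ Real.sin (ang K 1) ∧
      ‖p‖ ^ 2 =
        Real.cos (ang K 1) ^ 2 + (Real.sin (ang K 1) - ‖p - v‖) ^ 2 := by
  have hK0 : 0 < K := by omega
  set s1 := Real.sin (ang K 1) with hs1
  set c1 := Real.cos (ang K 1) with hc1
  have hpyth : s1 ^ 2 + c1 ^ 2 = 1 := Real.sin_sq_add_cos_sq _
  have hang2 : ang K 2 = 2 * ang K 1 := by unfold ang; push_cast; ring
  have hcos2 : Real.cos (ang K 2) = 2 * c1 ^ 2 - 1 := by rw [hang2, Real.cos_two_mul]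
  have ha1pi : ang K 1 ≤ Real.pi := by
    have h := ang_le_ang K (show (1:ℤ) ≤ (K:ℤ) by exact_mod_cast hK0)
    rwa [ang_K K hK0] at h
  have hs1nn : 0 ≤ s1 :=
    Real.sin_nonneg_of_nonneg_of_le_pi (ang_nonneg K (by norm_num)) ha1pi
  set A := ee K (2 * k) with hA
  set B := ee K (2 * (k + 1)) with hB
  have hABmul : A * ee K 2 = B := by rw [hA, hB, ee_mul]; congr 1; ring
  have hnormSqA : Complex.normSq A = 1 := by rw [Complex.normSq_eq_norm_sq, hA, abs_ee]; norm_num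
  have habs2 : ‖ee K 2 - 1‖ = 2 * s1 := by
    apply eq_of_sq_eq _ (norm_nonneg _) (by positivity)
    have h1 : Real.cos (ang K 2) = 1 - 2 * s1 ^ 2 := by rw [hcos2]; nlinarith [hpyth]
    rw [Complex.sq_norm, Complex.normSq_sub]
    simp [Complex.normSq_eq_norm_sq, abs_ee, ee_re, h1]
    ring
  have hdA : ‖p - A‖ = b * (2 * s1) := by
    have h1 : p - A = (b:ℂ) * (B - A) := by
      rw [hpeq]
      have h2 : (a:ℂ) = 1 - (b:ℂ) := by
        have : a = 1 - b := by linarith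
        rw [this]; push_cast; ring
      rw [h2]; ring
    have h2 : B - A = A * (ee K 2 - 1) := by rw [mul_sub, hABmul, mul_one]
    rw [h1, h2, norm_mul, norm_mul, Complex.norm_real, Real.norm_eq_abs, _root_.abs_of_nonneg hb, hA, abs_ee,
      one_mul, habs2]
  have hdB : ‖p - B‖ = a * (2 * s1) := by
    have h1 : p - B = -((a:ℂ) * (B - A)) := by
      rw [hpeq]
      have h2 : (b:ℂ) = 1 - (a:ℂ) := by
        have : b = 1 - a := by linarith
        rw [this]; push_cast; ring
      rw [h2]; ring
    have h2 : B - A = A * (ee K 2 - 1) := by rw [mul_sub, hABmul, mul_one]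
    rw [h1, norm_neg, h2, norm_mul, norm_mul, Complex.norm_real, Real.norm_eq_abs, _root_.abs_of_nonneg ha,
      hA, abs_ee, one_mul, habs2]
  have hAroots : A ∈ rootsSet K := ee_mem_rootsSet K hK0 k
  have hBroots : B ∈ rootsSet K := ee_mem_rootsSet K hK0 (k + 1)
  set t := ‖p - v‖ with ht
  have htnn : 0 ≤ t := norm_nonneg _
  have htA : t ≤ b * (2 * s1) := hdA ▸ hnear A hAroots
  have htB : t ≤ a * (2 * s1) := hdB ▸ hnear B hBroots
  have hge : min (b * (2 * s1)) (a * (2 * s1)) ≤ t := by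
    obtain ⟨j, hj, rfl⟩ := (mem_rootsSet_iff K v).mp hv
    by_cases hvA : ee K (2 * (j:ℤ)) = A
    · rw [ht, hvA, hdA]; exact min_le_left _ _
    by_cases hvB : ee K (2 * (j:ℤ)) = B
    · rw [ht, hvB, hdB]; exact min_le_right _ _
    have hKne : ((K:ℤ)) ≠ 0 := by exact_mod_cast hK0.ne'
    have hjk : ((k:ℤ) - j) % K ≠ 0 := by
      intro h0
      apply hvA
      have hdiv := Int.emod_add_mul_ediv ((k:ℤ) - j) K
      rw [h0] at hdiv
      have hj' : (j:ℤ) = k + (K:ℤ) * (-(((k:ℤ) - j) / K)) := by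
        have : (K:ℤ) * (((k:ℤ) - j) / K) = k - j := by linarith
        nlinarith [this]
      rw [hj']
      exact ee_even_shift K hK0 k _
    have hjk1 : ((k:ℤ) + 1 - j) % K ≠ 0 := by
      intro h0
      apply hvB
      have hdiv := Int.emod_add_mul_ediv ((k:ℤ) + 1 - j) K
      rw [h0] at hdiv
      have hj' : (j:ℤ) = (k + 1) + (K:ℤ) * (-(((k:ℤ) + 1 - j) / K)) := by
        have : (K:ℤ) * (((k:ℤ) + 1 - j) / K) = k + 1 - j := by linarith
        nlinarith [this]
      rw [hj']
      exact ee_even_shift K hK0 (k + 1) _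
    have hrev : (p * (starRingEnd ℂ) (ee K (2 * (j:ℤ)))).re =
        a * Real.cos (ang K (2 * (k - j))) + b * Real.cos (ang K (2 * (k + 1 - j))) := by
      rw [hpeq, conj_ee, add_mul, mul_assoc, mul_assoc, hA, hB, ee_mul, ee_mul,
        show 2 * k + -(2 * (j:ℤ)) = 2 * (k - j) by ring,
        show 2 * (k + 1) + -(2 * (j:ℤ)) = 2 * (k + 1 - j) by ring]
      simp [Complex.add_re, Complex.re_ofReal_mul, ee_re]
    have hApv : (p * (starRingEnd ℂ) A).re = a + b * Real.cos (ang K 2) := by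
      rw [hpeq, hA, conj_ee, add_mul, mul_assoc, mul_assoc, ee_mul, ee_mul,
        show 2 * k + -(2 * k) = (0:ℤ) by ring,
        show 2 * (k + 1) + -(2 * k) = (2:ℤ) by ring]
      have hang0 : ang K 0 = 0 := by unfold ang; push_cast; ring
      simp [Complex.add_re, Complex.re_ofReal_mul, ee_re, hang0]
    have hb1 := even_cos K hK (k - j) hjk
    have hb2 := even_cos K hK (k + 1 - j) hjk1
    have hcos2le : Real.cos (ang K 2) ≤ 1 := Real.cos_le_one _
    have hvle : (p * (starRingEnd ℂ) (ee K (2 * (j:ℤ)))).re ≤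
        (p * (starRingEnd ℂ) A).re := by
      rw [hrev, hApv]
      nlinarith [mul_le_mul_of_nonneg_left hb1 ha, mul_le_mul_of_nonneg_left hb2 hb,
        mul_le_mul_of_nonneg_left hcos2le ha]
    have hnormSqv : Complex.normSq (ee K (2 * (j:ℤ))) = 1 := by
      rw [Complex.normSq_eq_norm_sq, abs_ee]; norm_num
    have htsq : t ^ 2 = Complex.normSq p + 1 - 2 * (p * (starRingEnd ℂ) (ee K (2 * (j:ℤ)))).re := by
      rw [ht, Complex.sq_norm, Complex.normSq_sub, hnormSqv]
    have hdAsq : (b * (2 * s1)) ^ 2 =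
        Complex.normSq p + 1 - 2 * (p * (starRingEnd ℂ) A).re := by
      rw [← hdA, Complex.sq_norm, Complex.normSq_sub, hnormSqA]
    have : (b * (2 * s1)) ^ 2 ≤ t ^ 2 := by rw [htsq, hdAsq]; linarith
    exact le_trans (min_le_left _ _) (le_of_sq_le_sq'' this htnn)
  have htmin : t = min (b * (2 * s1)) (a * (2 * s1)) := le_antisymm (le_min htA htB) hge
  have hApvB : (A * (starRingEnd ℂ) B).re = Real.cos (ang K 2) := by
    rw [hA, hB, conj_ee, ee_mul, show 2 * k + -(2 * (k + 1)) = (-2:ℤ) by ring, ee_re,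
      show (-2:ℤ) = -(2:ℤ) by ring, ang_neg, Real.cos_neg]
  have hBpvA : (B * (starRingEnd ℂ) A).re = Real.cos (ang K 2) := by
    rw [hA, hB, conj_ee, ee_mul, show 2 * (k + 1) + -(2 * k) = (2:ℤ) by ring, ee_re]
  have hnormSqB : Complex.normSq B = 1 := by rw [Complex.normSq_eq_norm_sq, hB, abs_ee]; norm_num
  have hnormp : ‖p‖ ^ 2 = a ^ 2 + b ^ 2 + 2 * a * b * Real.cos (ang K 2) := by
    rw [Complex.sq_norm]
    have hexp : (p * (starRingEnd ℂ) p).re =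
        a ^ 2 * Complex.normSq A + b ^ 2 * Complex.normSq B +
          a * b * ((A * (starRingEnd ℂ) B).re + (B * (starRingEnd ℂ) A).re) := by
      rw [hpeq]
      simp only [map_add, map_mul, Complex.conj_ofReal]
      have hAA : A * (starRingEnd ℂ) A = (Complex.normSq A : ℂ) := Complex.mul_conj A
      have hBB : B * (starRingEnd ℂ) B = (Complex.normSq B : ℂ) := Complex.mul_conj B
      have hexpand : ((a:ℂ) * A + (b:ℂ) * B) * ((a:ℂ) * (starRingEnd ℂ) A + (b:ℂ) * (starRingEnd ℂ) B) =
          ((a:ℂ)^2) * (A * (starRingEnd ℂ) A) + ((b:ℂ)^2) * (B * (starRingEnd ℂ) B) +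
            ((a:ℂ) * (b:ℂ)) * (A * (starRingEnd ℂ) B) +
            ((a:ℂ) * (b:ℂ)) * (B * (starRingEnd ℂ) A) := by ring
      rw [hexpand, hAA, hBB]
      simp [Complex.add_re, Complex.re_ofReal_mul, ← Complex.ofReal_pow]
      ring
    have hre : Complex.normSq p = (p * (starRingEnd ℂ) p).re := by
      rw [Complex.mul_conj]; simp
    rw [hre, hexp, hnormSqA, hnormSqB, hApvB, hBpvA]
    ring
  constructor
  · -- t ≤ s1
    have h3 : a * (2 * s1) + b * (2 * s1) = 2 * s1 := by rw [← add_mul, hab, one_mul]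
    linarith [htA, htB]
  · rw [htmin, hnormp, hcos2]
    rcases le_total a b with hle | hle
    · have hm : min (b * (2 * s1)) (a * (2 * s1)) = a * (2 * s1) :=
        min_eq_right (mul_le_mul_of_nonneg_right hle (by positivity))
      rw [hm]
      have hbe : b = 1 - a := by linarith
      subst hbe
      linear_combination (4 * a - 4 * a ^ 2 - 1) * hpyth
    · have hm : min (b * (2 * s1)) (a * (2 * s1)) = b * (2 * s1) :=
        min_eq_left (mul_le_mul_of_nonneg_right hle (by positivity))
      rw [hm]
      have hae : a = 1 - b := by linarith
      subst hae
      linear_combination (4 * b - 4 * b ^ 2 - 1) * hpyth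


theorem stmt8 (K : ℕ) (hK : 2 ≤ K)
    (p : ℂ) (hp : p ∈ frontier (hullSet K))
    (v : ℂ) (hv : v ∈ rootsSet K)
    (hnear : ∀ w ∈ rootsSet K, ‖p - v‖ ≤ ‖p - w‖) :
    0 ≤ ‖p - v‖ ∧ ‖p - v‖ ≤ Real.sin (Real.pi / K) ∧
      ‖p‖ ^ 2 =
        Real.cos (Real.pi / K) ^ 2 +
          (Real.sin (Real.pi / K) - ‖p - v‖) ^ 2 := by
  obtain ⟨k, a, b, ha, hb, hab, hpeq⟩ := edge_of_frontier K hK hp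
  have h := main_calc K hK p v hv hnear k a b ha hb hab hpeq
  have hang1 : ang K 1 = Real.pi / K := by unfold ang; push_cast; ring
  rw [hang1] at h
  exact ⟨norm_nonneg _, h.1, h.2⟩
end
end

section
/- Let K ≥ 2 be an integer and set s = sin(π/K), c = cos(π/K). Let L ≥ 0 and λ be real numbers with λ > (s/(1 − c))·L. Then for every real t with 0 < t ≤ s, one has λ·(1 − √(c² + (s − t)²)) − L·t > 0. -/
open Complex Finset

noncomputable section

theorem stmt9 (K : ℕ) (hK : 2 ≤ K) (L lam : ℝ) (hL : 0 ≤ L)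
    (hlam : Real.sin (Real.pi / K) / (1 - Real.cos (Real.pi / K)) * L < lam) :
    ∀ t : ℝ, 0 < t → t ≤ Real.sin (Real.pi / K) →
      0 < lam * (1 - Real.sqrt (Real.cos (Real.pi / K) ^ 2 +
        (Real.sin (Real.pi / K) - t) ^ 2)) - L * t := by
  intro t ht hts
  have hKpos : (0:ℝ) < K := by exact_mod_cast Nat.lt_of_lt_of_le Nat.zero_lt_two hK
  set θ : ℝ := Real.pi / K with hθdef
  set s : ℝ := Real.sin θ with hs
  set c : ℝ := Real.cos θ with hc
  have hθpos : 0 < θ := div_pos Real.pi_pos hKpos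
  have hθle : θ ≤ Real.pi / 2 := by
    rw [hθdef, div_le_div_iff₀ hKpos two_pos]
    nlinarith [mul_le_mul_of_nonneg_left (by exact_mod_cast hK : (2:ℝ) ≤ K) Real.pi_pos.le]
  have hspos : 0 < s := Real.sin_pos_of_pos_of_lt_pi hθpos (lt_of_le_of_lt hθle (by linarith [Real.pi_pos]))
  have hcnn : 0 ≤ c := Real.cos_nonneg_of_mem_Icc ⟨by linarith, hθle⟩
  have hpy : s ^ 2 + c ^ 2 = 1 := Real.sin_sq_add_cos_sq θ
  have hclt : c < 1 := by nlinarith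
  have hc1 : 0 < 1 - c := by linarith
  have hlampos : 0 < lam := lt_of_le_of_lt (by positivity) hlam
  -- key sqrt bound
  have hb : 0 ≤ 1 - (1 - c) / s * t := by
    rw [sub_nonneg, div_mul_eq_mul_div, div_le_one hspos]
    nlinarith
  have hsq' : s ^ 2 * (c ^ 2 + (s - t) ^ 2) ≤ (s - (1 - c) * t) ^ 2 := by
    nlinarith [mul_nonneg (mul_nonneg (mul_nonneg hcnn hc1.le) ht.le) (sub_nonneg.mpr hts)]
  have hsq : c ^ 2 + (s - t) ^ 2 ≤ (1 - (1 - c) / s * t) ^ 2 := by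
    have heq : 1 - (1 - c) / s * t = (s - (1 - c) * t) / s := by field_simp
    rw [heq, div_pow, le_div_iff₀ (by positivity : (0:ℝ) < s ^ 2)]
    nlinarith [hsq']
  have hsqrt : Real.sqrt (c ^ 2 + (s - t) ^ 2) ≤ 1 - (1 - c) / s * t := by
    rw [show (1 - (1 - c) / s * t) = Real.sqrt ((1 - (1 - c) / s * t) ^ 2) from (Real.sqrt_sq hb).symm]
    exact Real.sqrt_le_sqrt hsq
  have hkey : s * L < lam * (1 - c) := by
    have h2 := mul_lt_mul_of_pos_right hlam hc1
    calc s * L = s / (1 - c) * L * (1 - c) := by field_simp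
    _ < lam * (1 - c) := h2
  have hmul : lam * Real.sqrt (c ^ 2 + (s - t) ^ 2) ≤ lam * (1 - (1 - c) / s * t) :=
    mul_le_mul_of_nonneg_left hsqrt hlampos.le
  have h3 : L * t < lam * ((1 - c) / s * t) := by
    rw [div_mul_eq_mul_div, mul_div_assoc', lt_div_iff₀ hspos]
    nlinarith
  rw [mul_sub, mul_one] at hmul
  linarith [hmul, h3]
end
end
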